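/- arXiv:1012.5551 — 7 statements merged into one kernel-verified Lean document; each statement's English description precedes it below -/
import Mathlib

section
/- Let R be a commutative Noetherian ring and 𝔞 an ideal of R. Then there exist only finitely many prime ideals 𝔭 containing 𝔞 such that depth(R_𝔭) = grade(𝔞). -/
open RingTheory.Sequence IsLocalRing

/-- The depth of an `R`-module `M` over a local ring `R`: the supremum of lengths of
`M`-regular sequences contained in the maximal ideal. -/
noncomputable def localDepth (R : Type*) [CommRing R] [IsLocalRing R]
    (M : Type*) [AddCommGroup M] [Module R M] : ℕ∞ :=
  ⨆ (rs : List R) (_ : RingTheory.Sequence.IsRegular M rs ∧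
      ∀ x ∈ rs, x ∈ IsLocalRing.maximalIdeal R), (rs.length : ℕ∞)

/-- The grade of an ideal: supremum of lengths of `R`-regular sequences contained in it. -/
noncomputable def idealGrade {R : Type*} [CommRing R] (I : Ideal R) : ℕ∞ :=
  ⨆ (rs : List R) (_ : RingTheory.Sequence.IsRegular R rs ∧ ∀ x ∈ rs, x ∈ I),
    (rs.length : ℕ∞)

/-- The depth of the localization `R_𝔭`. -/
noncomputable def primeDepth {R : Type*} [CommRing R] (p : Ideal R) (hp : p.IsPrime) : ℕ∞ :=
  letI := hp
  localDepth (Localization.AtPrime p) (Localization.AtPrime p)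

/-- The depth of the localized module `M_𝔭` over `R_𝔭`. -/
noncomputable def primeDepthMod {R : Type*} [CommRing R] (p : Ideal R) (hp : p.IsPrime)
    (M : Type*) [AddCommGroup M] [Module R M] : ℕ∞ :=
  letI := hp
  localDepth (Localization.AtPrime p) (LocalizedModule p.primeCompl M)

/-- `M` has well-defined rank `r`: `M ⊗ Q(R)` is free of rank `r` over the total
quotient ring `Q(R)`. -/
def HasRank (R : Type*) [CommRing R] (M : Type*) [AddCommGroup M] [Module R M] (r : ℕ) : Prop :=
  Nonempty (LocalizedModule (nonZeroDivisors R) M ≃ₗ[Localization (nonZeroDivisors R)]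
    (Fin r → Localization (nonZeroDivisors R)))

/-- `M` is `m`-torsionless (characterization `(b_m)`):
`depth M_𝔭 ≥ min (m, depth R_𝔭)` for every prime `𝔭`. -/
def IsTorsionlessOfOrder (m : ℕ) (R : Type*) [CommRing R]
    (M : Type*) [AddCommGroup M] [Module R M] : Prop :=
  ∀ (p : Ideal R) (hp : p.IsPrime),
    min (m : ℕ∞) (primeDepth p hp) ≤ primeDepthMod p hp M

/-- `M` has projective dimension at most `n` over `R`. -/
def HasProjDimLE (R : Type u) [CommRing R] :
    ℕ → (M : Type u) → [AddCommGroup M] → [Module R M] → Prop :=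
  Nat.rec (motive := fun _ => (M : Type u) → [AddCommGroup M] → [Module R M] → Prop)
    (fun M _ _ => Module.Projective R M)
    (fun _ ih M _ _ => ∃ (k : ℕ) (f : (Fin k → R) →ₗ[R] M), Function.Surjective f ∧
      ih (LinearMap.ker f))

/-- `M` has projective dimension exactly `n` over `R`. -/
def ProjDimEq (R : Type u) [CommRing R] (n : ℕ)
    (M : Type u) [AddCommGroup M] [Module R M] : Prop :=
  HasProjDimLE R n M ∧ ∀ k, HasProjDimLE R k M → n ≤ k

/-- `M` has finite projective dimension over `R`. -/
def HasFiniteProjDim (R : Type u) [CommRing R]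
    (M : Type u) [AddCommGroup M] [Module R M] : Prop :=
  ∃ n, HasProjDimLE R n M

/-- `M` is torsion-free: the natural map `M → M ⊗ Q(R)` is injective. -/
def IsTorsionFreeMod (R : Type*) [CommRing R] (M : Type*) [AddCommGroup M] [Module R M] : Prop :=
  Function.Injective (LocalizedModule.mkLinearMap (nonZeroDivisors R) M)

/-- The localized module `M_𝔭` is free over `R_𝔭`. -/
def FreeAtPrime {R : Type*} [CommRing R] (p : Ideal R) (hp : p.IsPrime)
    (M : Type*) [AddCommGroup M] [Module R M] : Prop :=
  letI := hp
  Module.Free (Localization.AtPrime p) (LocalizedModule p.primeCompl M)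

/-- The element `x` generates a free rank-one submodule after localizing at `𝔭`,
i.e. the exact sequence `0 → R_𝔭·x → M_𝔭 → (M/Rx)_𝔭 → 0` has first term `≅ R_𝔭`. -/
def ElemLinIndepAt {R : Type*} [CommRing R] (p : Ideal R) (hp : p.IsPrime)
    (M : Type*) [AddCommGroup M] [Module R M] (x : M) : Prop :=
  letI := hp
  Function.Injective (LinearMap.toSpanSingleton (Localization.AtPrime p)
    (LocalizedModule p.primeCompl M) (LocalizedModule.mkLinearMap p.primeCompl M x))

/-- A (Noetherian) local ring is regular iff its maximal ideal is generated by a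
regular sequence. -/
def IsRegularLocalRingP (R : Type*) [CommRing R] [IsLocalRing R] : Prop :=
  ∃ rs : List R, RingTheory.Sequence.IsRegular R rs ∧
    Ideal.span {x | x ∈ rs} = IsLocalRing.maximalIdeal R

/-- The localization `R_𝔭` is a regular local ring. -/
def RegularAtPrime {R : Type*} [CommRing R] (p : Ideal R) (hp : p.IsPrime) : Prop :=
  letI := hp
  IsRegularLocalRingP (Localization.AtPrime p)

universe u



namespace StmtAux

variable {R : Type*} [CommRing R]

lemma smul_top_eq (I : Ideal R) : (I • ⊤ : Submodule R R) = I := by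
  rw [smul_eq_mul, Ideal.mul_top]

section Ass

variable {M : Type*} [AddCommGroup M] [Module R M]

lemma isAP_iff' [IsNoetherianRing R] {q : Ideal R} :
    IsAssociatedPrime q M ↔ q.IsPrime ∧ ∃ x : M, q = (R ∙ x).annihilator := by
  have e : ∀ x : M, (⊥ : Submodule R M).colon {x} = (R ∙ x).annihilator := fun x => by
    ext r
    rw [Submodule.mem_colon_singleton, Submodule.mem_bot,
      Submodule.mem_annihilator_span_singleton]
  simp_rw [isAssociatedPrime_iff, e]

/-- SES lemma for associated primes. -/
lemma isAssociatedPrime_sub_or_quot [IsNoetherianRing R] {q : Ideal R} (hq : IsAssociatedPrime q M)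
    (N : Submodule R M) :
    IsAssociatedPrime q N ∨ IsAssociatedPrime q (M ⧸ N) := by
  obtain ⟨hqp, x, hx⟩ := isAP_iff'.mp hq
  by_cases h : ∃ r : R, r • x ∈ N ∧ r • x ≠ 0
  · obtain ⟨r, hrm, hrnz⟩ := h
    have hrq : r ∉ q := by
      intro hr
      exact hrnz ((Submodule.mem_annihilator_span_singleton x r).mp (hx ▸ hr))
    left
    refine isAP_iff'.mpr ⟨hqp, ⟨r • x, hrm⟩, ?_⟩
    ext s
    rw [Submodule.mem_annihilator_span_singleton]
    have : (s • (⟨r • x, hrm⟩ : N) = 0) ↔ s • (r • x) = 0 := by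
      constructor
      · intro h'; exact congrArg Subtype.val h'
      · intro h'; exact Subtype.ext h'
    rw [this, smul_smul]
    rw [← Submodule.mem_annihilator_span_singleton x (s * r), ← hx]
    constructor
    · intro hsq; exact Ideal.mul_mem_right r q hsq
    · intro hsr; exact (hqp.mem_or_mem hsr).resolve_right hrq
  · push_neg at h
    right
    refine isAP_iff'.mpr ⟨hqp, Submodule.Quotient.mk x, ?_⟩
    ext s
    rw [Submodule.mem_annihilator_span_singleton, ← Submodule.Quotient.mk_smul,
      Submodule.Quotient.mk_eq_zero]
    constructor
    · intro hsq
      have : s • x = 0 := (Submodule.mem_annihilator_span_singleton x s).mp (hx ▸ hsq)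
      rw [this]; exact N.zero_mem
    · intro hmem
      have : s • x = 0 := h s hmem
      rw [hx, Submodule.mem_annihilator_span_singleton]; exact this

/-- Associated primes of a cyclic module `R∙x` with prime annihilator. -/
lemma ass_span_singleton_subset [IsNoetherianRing R] {q p : Ideal R} (hp : p.IsPrime) {x : M}
    (hx : p = (R ∙ x).annihilator) (hq : IsAssociatedPrime q (R ∙ x)) : q = p := by
  obtain ⟨hqp, y0, hqy⟩ := isAP_iff'.mp hq
  obtain ⟨r, hr⟩ := Submodule.mem_span_singleton.mp y0.2
  by_cases hrp : r ∈ p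
  · exfalso
    have : (1 : R) ∈ q := by
      rw [hqy, Submodule.mem_annihilator_span_singleton]
      have h0 : r • x = 0 := (Submodule.mem_annihilator_span_singleton x r).mp (hx ▸ hrp)
      apply Subtype.ext
      show (1 : R) • (y0 : M) = 0
      rw [one_smul, ← hr, h0]
    exact hqp.ne_top (Ideal.eq_top_iff_one q |>.mpr this)
  · ext s
    rw [hqy, Submodule.mem_annihilator_span_singleton]
    have hval : (s • y0 = 0) ↔ s • (y0 : M) = 0 := by
      constructor
      · intro h'; exact congrArg Subtype.val h'
      · intro h'; exact Subtype.ext h'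
    rw [hval, ← hr, smul_smul, ← Submodule.mem_annihilator_span_singleton x (s * r), ← hx]
    constructor
    · intro hsr; exact (hp.mem_or_mem hsr).resolve_right hrp
    · intro hs; exact Ideal.mul_mem_right r p hs

variable (R M) in
theorem associatedPrimes_finite [IsNoetherianRing R] [Module.Finite R M] :
    (associatedPrimes R M).Finite := by
  haveI : IsNoetherian R M := isNoetherian_of_isNoetherianRing_of_finite R M
  have key : ∀ N : Submodule R M, (associatedPrimes R (M ⧸ N)).Finite := by
    intro N
    induction N using IsNoetherian.induction with
    | _ N ih =>
      by_cases hs : Subsingleton (M ⧸ N)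
      · rw [associatedPrimes.eq_empty_of_subsingleton]; exact Set.finite_empty
      · haveI : Nontrivial (M ⧸ N) := not_subsingleton_iff_nontrivial.mp hs
        obtain ⟨p, hp⟩ := associatedPrimes.nonempty R (M ⧸ N)
        obtain ⟨hpp, x', hx'⟩ := isAP_iff'.mp hp
        obtain ⟨x, rfl⟩ := Submodule.Quotient.mk_surjective N x'
        have hxN : x ∉ N := by
          intro hx
          apply hpp.ne_top
          rw [hx', Ideal.eq_top_iff_one, Submodule.mem_annihilator_span_singleton,
            ← Submodule.Quotient.mk_smul, one_smul, Submodule.Quotient.mk_eq_zero]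
          exact hx
        set J : Submodule R M := N ⊔ (R ∙ x) with hJ
        have hNJ : N < J := by
          refine lt_of_le_of_ne le_sup_left (fun h => hxN ?_)
          rw [h]; exact Submodule.mem_sup_right (Submodule.mem_span_singleton_self x)
        have hfin : (associatedPrimes R (M ⧸ J)).Finite := ih J hNJ
        have hsub : associatedPrimes R (M ⧸ N) ⊆
            insert p (associatedPrimes R (M ⧸ J)) := by
          intro q hq
          rcases isAssociatedPrime_sub_or_quot hq (R ∙ (Submodule.Quotient.mk x)) with h | h
          · exact Set.mem_insert_iff.mpr (Or.inl (ass_span_singleton_subset hpp hx' h))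
          · right
            have e1 : (R ∙ (Submodule.Quotient.mk x : M ⧸ N)) =
                Submodule.map N.mkQ (R ∙ x) := by
              rw [Submodule.map_span, Set.image_singleton]; rfl
            have e : ((M ⧸ N) ⧸ (R ∙ (Submodule.Quotient.mk x : M ⧸ N))) ≃ₗ[R] M ⧸ J := by
              rw [e1]
              exact Submodule.quotientQuotientEquivQuotientSup N (R ∙ x)
            rw [← LinearEquiv.AssociatedPrimes.eq e]
            exact h
        exact Set.Finite.subset (hfin.insert p) hsub
  have e : M ≃ₗ[R] M ⧸ (⊥ : Submodule R M) := (Submodule.quotEquivOfEqBot ⊥ rfl).symm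
  rw [LinearEquiv.AssociatedPrimes.eq e]
  exact key ⊥

end Ass

end StmtAux
namespace StmtAux2

variable {R : Type*} [CommRing R]

section Avoid

variable {M : Type*} [AddCommGroup M] [Module R M]

lemma not_isSMulRegular_iff (r : R) :
    ¬ IsSMulRegular M r ↔ ∃ x : M, x ≠ 0 ∧ r • x = 0 := by
  rw [isSMulRegular_iff_right_eq_zero_of_smul]
  push_neg
  exact exists_congr fun x => and_comm

lemma mem_ass_union_of_not_regular [IsNoetherianRing R] {r : R}
    (h : ¬ IsSMulRegular M r) :
    ∃ p ∈ associatedPrimes R M, r ∈ p := by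
  have h1 := (not_isSMulRegular_iff (M := M) r).mp h
  have h2 : r ∈ (⋃ p ∈ associatedPrimes R M, (p : Set R)) := by
    rw [biUnion_associatedPrimes_eq_zero_divisors]
    exact h1
  simpa using Set.mem_iUnion₂.mp h2

lemma not_regular_of_mem_ass [IsNoetherianRing R] {p : Ideal R}
    (hp : p ∈ associatedPrimes R M) {r : R} (hr : r ∈ p) :
    ¬ IsSMulRegular M r := by
  rw [not_isSMulRegular_iff]
  have : r ∈ ⋃ p ∈ associatedPrimes R M, (p : Set R) := Set.mem_biUnion hp hr
  rwa [biUnion_associatedPrimes_eq_zero_divisors] at this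

/-- If every element of `I` is a zero divisor on `M`, then `I` is contained in an
associated prime. -/
lemma exists_associated_le [IsNoetherianRing R] [Module.Finite R M] (I : Ideal R)
    (h : ∀ r ∈ I, ¬ IsSMulRegular M r) :
    ∃ p ∈ associatedPrimes R M, I ≤ p := by
  have hfin := StmtAux.associatedPrimes_finite R M
  have hsub : (I : Set R) ⊆ ⋃ p ∈ (hfin.toFinset : Set (Ideal R)), (p : Set R) := by
    intro r hr
    obtain ⟨p, hp, hrp⟩ := mem_ass_union_of_not_regular (h r hr)
    exact Set.mem_biUnion (show p ∈ (hfin.toFinset : Set (Ideal R)) by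
      simpa [Set.Finite.mem_toFinset] using hp) hrp
  have := (Ideal.subset_union_prime (⊥ : Ideal R) ⊥ (fun p hp _ _ =>
    (Set.Finite.mem_toFinset hfin |>.mp hp).isPrime)).mp hsub
  obtain ⟨p, hpT, hIp⟩ := this
  exact ⟨p, Set.Finite.mem_toFinset hfin |>.mp hpT, hIp⟩

/-- Prime avoidance for two modules: find a common regular element in `I`. -/
lemma exists_common_regular [IsNoetherianRing R]
    {M₁ M₂ : Type*} [AddCommGroup M₁] [Module R M₁] [Module.Finite R M₁]
    [AddCommGroup M₂] [Module R M₂] [Module.Finite R M₂]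
    (I : Ideal R) {u₁ u₂ : R} (hu₁ : u₁ ∈ I) (hu₂ : u₂ ∈ I)
    (h₁ : IsSMulRegular M₁ u₁) (h₂ : IsSMulRegular M₂ u₂) :
    ∃ z ∈ I, IsSMulRegular M₁ z ∧ IsSMulRegular M₂ z := by
  classical
  by_contra hcon
  push_neg at hcon
  have hfin₁ := StmtAux.associatedPrimes_finite R M₁
  have hfin₂ := StmtAux.associatedPrimes_finite R M₂
  set T : Finset (Ideal R) := hfin₁.toFinset ∪ hfin₂.toFinset with hTdef
  have hmem : ∀ p ∈ T, p ∈ associatedPrimes R M₁ ∨ p ∈ associatedPrimes R M₂ := by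
    intro p hp
    rcases Finset.mem_union.mp hp with h | h
    · exact Or.inl (Set.Finite.mem_toFinset hfin₁ |>.mp h)
    · exact Or.inr (Set.Finite.mem_toFinset hfin₂ |>.mp h)
  have hsub : (I : Set R) ⊆ ⋃ p ∈ (T : Set (Ideal R)), (p : Set R) := by
    intro r hr
    by_cases hreg : IsSMulRegular M₁ r
    · obtain ⟨p, hp, hrp⟩ := mem_ass_union_of_not_regular (hcon r hr hreg)
      refine Set.mem_biUnion (show p ∈ (T : Set (Ideal R)) by
        simp only [hTdef, Finset.coe_union, Set.mem_union, Set.Finite.mem_toFinset,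
          Finset.mem_coe]
        exact Or.inr hp) hrp
    · obtain ⟨p, hp, hrp⟩ := mem_ass_union_of_not_regular hreg
      refine Set.mem_biUnion (show p ∈ (T : Set (Ideal R)) by
        simp only [hTdef, Finset.coe_union, Set.mem_union, Set.Finite.mem_toFinset,
          Finset.mem_coe]
        exact Or.inl hp) hrp
  have := (Ideal.subset_union_prime (⊥ : Ideal R) ⊥ (fun p hp _ _ =>
    ((hmem p hp).elim (fun h => h.isPrime) (fun h => h.isPrime)))).mp hsub
  obtain ⟨p, hpT, hIp⟩ := this
  rcases hmem p hpT with h | h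
  · exact not_regular_of_mem_ass h (hIp hu₁) h₁
  · exact not_regular_of_mem_ass h (hIp hu₂) h₂

end Avoid

section Exchange

lemma quot_smul_mk (J : Ideal R) (a b : R) :
    a • (Ideal.Quotient.mk J b) = Ideal.Quotient.mk J (a * b) := by
  rw [← Ideal.Quotient.mk_eq_mk, ← Ideal.Quotient.mk_eq_mk, ← Submodule.Quotient.mk_smul,
    smul_eq_mul]

lemma smul_mk_eq_zero_iff (J : Ideal R) (a b : R) :
    a • (Ideal.Quotient.mk J b) = 0 ↔ a * b ∈ J := by
  rw [quot_smul_mk]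
  exact Ideal.Quotient.eq_zero_iff_mem

lemma mk_eq_zero_iff (J : Ideal R) (b : R) :
    (Ideal.Quotient.mk J b) = 0 ↔ b ∈ J :=
  Ideal.Quotient.eq_zero_iff_mem

/-- The exchange lemma: if every element of `I` is a zero divisor mod `J ⊔ (x)`,
then the same is true mod `J ⊔ (y)`, for `x y ∈ I` regular mod `J`. -/
lemma exchange [IsNoetherianRing R] {I J : Ideal R} {x y : R} (hxI : x ∈ I) (hyI : y ∈ I)
    (hx : IsSMulRegular (R ⧸ J) x) (hy : IsSMulRegular (R ⧸ J) y)
    (h : ∀ r ∈ I, ¬ IsSMulRegular (R ⧸ (J ⊔ Ideal.span {x})) r) :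
    ∀ r ∈ I, ¬ IsSMulRegular (R ⧸ (J ⊔ Ideal.span {y})) r := by
  haveI hnt : Nontrivial (R ⧸ (J ⊔ Ideal.span {x})) := by
    by_contra hs
    rw [not_nontrivial_iff_subsingleton] at hs
    exact h x hxI (fun a b _ => Subsingleton.elim a b)
  obtain ⟨p, hpass, hIp⟩ :=
    exists_associated_le (M := R ⧸ (J ⊔ Ideal.span {x})) I h
  obtain ⟨hpp, c', hc'⟩ := StmtAux.isAP_iff'.mp hpass
  obtain ⟨c, rfl⟩ := Ideal.Quotient.mk_surjective c'
  have hcmem : ∀ i ∈ I, i * c ∈ J ⊔ Ideal.span {x} := by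
    intro i hi
    have : i ∈ (R ∙ (Ideal.Quotient.mk (J ⊔ Ideal.span {x}) c)).annihilator :=
      hc' ▸ hIp hi
    rw [Submodule.mem_annihilator_span_singleton, smul_mk_eq_zero_iff] at this
    exact this
  have hcnot : c ∉ J ⊔ Ideal.span {x} := by
    intro hc
    apply hpp.ne_top
    rw [hc', Ideal.eq_top_iff_one, Submodule.mem_annihilator_span_singleton,
      smul_mk_eq_zero_iff, one_mul]
    exact hc
  -- j + d * x = y * c
  obtain ⟨j, hj, t, ht, hyc⟩ := Submodule.mem_sup.mp (hcmem y hyI)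
  obtain ⟨d, rfl⟩ := Ideal.mem_span_singleton'.mp ht
  have hdnot : d ∉ J ⊔ Ideal.span {y} := by
    intro hd
    obtain ⟨j', hj', t', ht', hd'⟩ := Submodule.mem_sup.mp hd
    obtain ⟨e, rfl⟩ := Ideal.mem_span_singleton'.mp ht'
    apply hcnot
    have hz : Ideal.Quotient.mk J (y * (c - x * e)) = 0 := by
      rw [mk_eq_zero_iff]
      have : y * (c - x * e) = j + x * j' := by
        linear_combination (-1 : R) * hyc - x * hd'
      rw [this]
      exact Submodule.add_mem _ hj (Ideal.mul_mem_left J x hj')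
    have h0 : y • (Ideal.Quotient.mk J (c - x * e)) = y • (0 : R ⧸ J) := by
      rw [quot_smul_mk, hz, smul_zero]
    have := hy h0
    rw [mk_eq_zero_iff] at this
    rw [show c = (c - x * e) + e * x by ring]
    exact Submodule.add_mem _ (Submodule.mem_sup_left this)
      (Submodule.mem_sup_right (Ideal.mem_span_singleton'.mpr ⟨e, rfl⟩))
  have hdkill : ∀ i ∈ I, i * d ∈ J ⊔ Ideal.span {y} := by
    intro i hi
    obtain ⟨j'', hj'', t'', ht'', hic⟩ := Submodule.mem_sup.mp (hcmem i hi)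
    obtain ⟨f, rfl⟩ := Ideal.mem_span_singleton'.mp ht''
    have hz : Ideal.Quotient.mk J (x * (i * d - y * f)) = 0 := by
      rw [mk_eq_zero_iff]
      have : x * (i * d - y * f) = y * j'' - i * j := by
        linear_combination i * hyc - y * hic
      rw [this]
      exact Submodule.sub_mem _ (Ideal.mul_mem_left J y hj'') (Ideal.mul_mem_left J i hj)
    have h0 : x • (Ideal.Quotient.mk J (i * d - y * f)) = x • (0 : R ⧸ J) := by
      rw [quot_smul_mk, hz, smul_zero]
    have := hx h0
    rw [mk_eq_zero_iff] at this
    rw [show i * d = (i * d - y * f) + f * y by ring]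
    exact Submodule.add_mem _ (Submodule.mem_sup_left this)
      (Submodule.mem_sup_right (Ideal.mem_span_singleton'.mpr ⟨f, rfl⟩))
  intro r hr
  rw [not_isSMulRegular_iff]
  refine ⟨Ideal.Quotient.mk _ d, ?_, ?_⟩
  · rw [Ne, mk_eq_zero_iff]; exact hdnot
  · rw [smul_mk_eq_zero_iff]; exact hdkill r hr

end Exchange

end StmtAux2
namespace StmtAux3

open StmtAux2

variable {R : Type*} [CommRing R]

noncomputable def quotIdealEquiv (J : Ideal R) : (R ⧸ (J • ⊤ : Submodule R R)) ≃ₗ[R] R ⧸ J :=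
  Submodule.quotEquivOfEq _ _ (StmtAux.smul_top_eq J)

lemma isSMulRegular_smulTop_iff (J : Ideal R) (r : R) :
    IsSMulRegular (R ⧸ (J • ⊤ : Submodule R R)) r ↔ IsSMulRegular (R ⧸ J) r :=
  (quotIdealEquiv J).isSMulRegular_congr r

lemma ofList_le {xs : List R} {a : Ideal R} (h : ∀ x ∈ xs, x ∈ a) :
    Ideal.ofList xs ≤ a :=
  Ideal.span_le.mpr fun x hx => h x hx

lemma isRegular_append_left {M : Type*} [AddCommGroup M] [Module R M] {l₁ l₂ : List R}
    (h : IsRegular M (l₁ ++ l₂)) : IsRegular M l₁ := by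
  constructor
  · exact ((isWeaklyRegular_append_iff M l₁ l₂).mp h.toIsWeaklyRegular).1
  · intro heq
    have hle : Ideal.ofList l₁ ≤ Ideal.ofList (l₁ ++ l₂) :=
      Ideal.span_mono fun x hx => List.mem_append_left _ hx
    exact h.top_ne_smul (le_antisymm (heq.le.trans (Submodule.smul_mono_left hle)) le_top)

lemma last_regular {l : List R} {z : R} (h : IsWeaklyRegular R (l ++ [z])) :
    IsSMulRegular (R ⧸ Ideal.ofList l) z := by
  have h2 := ((isWeaklyRegular_append_iff R l [z]).mp h).2
  exact (isSMulRegular_smulTop_iff _ z).mp ((isWeaklyRegular_singleton_iff _ z).mp h2)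

lemma isRegular_append_singleton {a : Ideal R} (ha : a ≠ ⊤) {xs : List R}
    (hxs : IsRegular R xs) (hsub : ∀ x ∈ xs, x ∈ a) {y : R} (hy : y ∈ a)
    (hreg : IsSMulRegular (R ⧸ Ideal.ofList xs) y) : IsRegular R (xs ++ [y]) := by
  constructor
  · rw [isWeaklyRegular_append_iff]
    exact ⟨hxs.toIsWeaklyRegular, (isWeaklyRegular_singleton_iff _ y).mpr
      ((isSMulRegular_smulTop_iff _ y).mpr hreg)⟩
  · intro heq
    apply ha
    rw [StmtAux.smul_top_eq] at heq
    rw [eq_top_iff, heq]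
    refine ofList_le fun x hx => ?_
    rcases List.mem_append.mp hx with h | h
    · exact hsub x h
    · rw [List.mem_singleton.mp h]; exact hy

lemma not_regular_of_mem_ofList {J : Ideal R} (hJ : J ≠ ⊤) {r : R} (hr : r ∈ J) :
    ¬ IsSMulRegular (R ⧸ J) r := by
  haveI := Ideal.Quotient.nontrivial_iff.mpr hJ
  rw [not_isSMulRegular_iff]
  refine ⟨Ideal.Quotient.mk J 1, ?_, ?_⟩
  · rw [Ne, mk_eq_zero_iff]
    exact fun h => hJ ((Ideal.eq_top_iff_one J).mpr h)
  · rw [smul_mk_eq_zero_iff, mul_one]; exact hr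

lemma exists_maximal_regular [IsNoetherianRing R] [Nontrivial R] {a : Ideal R} (ha : a ≠ ⊤) :
    ∃ xs : List R, IsRegular R xs ∧ (∀ x ∈ xs, x ∈ a) ∧
      ∀ r ∈ a, ¬ IsSMulRegular (R ⧸ Ideal.ofList xs) r := by
  have hmax := (set_has_maximal_iff_noetherian (R := R) (M := R)).mpr inferInstance
  obtain ⟨I₀, ⟨xs, hreg, hsub, hofl⟩, hm⟩ := hmax
    {I : Submodule R R | ∃ xs : List R, IsRegular R xs ∧ (∀ x ∈ xs, x ∈ a) ∧
      Ideal.ofList xs = I}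
    ⟨Ideal.ofList [], [], IsRegular.nil R R, by simp, rfl⟩
  refine ⟨xs, hreg, hsub, ?_⟩
  intro r hra hcon
  have hJa : Ideal.ofList xs ≤ a := ofList_le hsub
  have hJne : Ideal.ofList xs ≠ ⊤ := fun h => ha (top_le_iff.mp (h ▸ hJa))
  have hrnot : r ∉ Ideal.ofList xs := fun hmem => not_regular_of_mem_ofList hJne hmem hcon
  have hreg' : IsRegular R (xs ++ [r]) := isRegular_append_singleton ha hreg hsub hra hcon
  refine hm (Ideal.ofList (xs ++ [r])) ⟨xs ++ [r], hreg', ?_, rfl⟩ ?_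
  · intro x hx
    rcases List.mem_append.mp hx with h | h
    · exact hsub x h
    · rw [List.mem_singleton.mp h]; exact hra
  · rw [← hofl]
    refine lt_of_le_of_ne (Ideal.span_mono fun x hx => List.mem_append_left _ hx) ?_
    intro he
    exact hrnot (he ▸ Ideal.subset_span (List.mem_append_right _ (List.mem_singleton_self r)))

section Transfers

variable {A : Type*} [CommRing A]

lemma isSMulRegular_quotQuot_iff (J K : Ideal A) (r : A) :
    IsSMulRegular ((A ⧸ J) ⧸ (K.map (Ideal.Quotient.mk J))) (Ideal.Quotient.mk J r)
      ↔ IsSMulRegular (A ⧸ (J ⊔ K)) r := by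
  refine Equiv.isSMulRegular_congr (e := (DoubleQuot.quotQuotEquivQuotSup J K).toEquiv) ?_
  intro ξ
  obtain ⟨w1, rfl⟩ := Ideal.Quotient.mk_surjective ξ
  obtain ⟨w, rfl⟩ := Ideal.Quotient.mk_surjective w1
  show DoubleQuot.quotQuotEquivQuotSup J K _
    = r • DoubleQuot.quotQuotEquivQuotSup J K _
  rw [quot_smul_mk, ← map_mul]
  have h1 : (Ideal.Quotient.mk (K.map (Ideal.Quotient.mk J)))
      ((Ideal.Quotient.mk J) (r * w)) = DoubleQuot.quotQuotMk J K (r * w) := rfl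
  have h2 : (Ideal.Quotient.mk (K.map (Ideal.Quotient.mk J)))
      ((Ideal.Quotient.mk J) w) = DoubleQuot.quotQuotMk J K w := rfl
  rw [h1, h2, DoubleQuot.quotQuotEquivQuotSup_quotQuotMk,
    DoubleQuot.quotQuotEquivQuotSup_quotQuotMk, quot_smul_mk]

variable [IsLocalRing A]

lemma isLocalRing_quot {J : Ideal A} (hJ : J ≤ maximalIdeal A) : IsLocalRing (A ⧸ J) := by
  haveI : Nontrivial (A ⧸ J) := Ideal.Quotient.nontrivial_iff.mpr
    (fun h => (maximalIdeal.isMaximal A).ne_top (top_le_iff.mp (h ▸ hJ)))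
  exact IsLocalRing.of_surjective' (Ideal.Quotient.mk J) Ideal.Quotient.mk_surjective

lemma quot_mk_mem_maximalIdeal {J : Ideal A} (hJ : J ≤ maximalIdeal A)
    [IsLocalRing (A ⧸ J)] {w : A} :
    Ideal.Quotient.mk J w ∈ maximalIdeal (A ⧸ J) ↔ w ∈ maximalIdeal A := by
  constructor
  · intro h
    rw [mem_maximalIdeal, mem_nonunits_iff]
    intro hu
    have h' : ¬ IsUnit (Ideal.Quotient.mk J w) := by
      rwa [mem_maximalIdeal, mem_nonunits_iff] at h
    exact h' (hu.map (Ideal.Quotient.mk J))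
  · intro h
    rw [mem_maximalIdeal, mem_nonunits_iff]
    intro hu
    obtain ⟨b, hb⟩ := isUnit_iff_exists_inv.mp hu
    obtain ⟨v, rfl⟩ := Ideal.Quotient.mk_surjective b
    have h1 : Ideal.Quotient.mk J (w * v) = Ideal.Quotient.mk J 1 := by
      rw [map_mul, hb, map_one]
    have h2 : w * v - 1 ∈ maximalIdeal A :=
      hJ ((Ideal.Quotient.mk_eq_mk_iff_sub_mem (w * v) 1).mp h1)
    have h3 : (1 : A) ∈ maximalIdeal A := by
      have : (1 : A) = w * v - (w * v - 1) := by ring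
      rw [this]
      exact Submodule.sub_mem _ (Ideal.mul_mem_right v _ h) h2
    exact (maximalIdeal.isMaximal A).ne_top ((Ideal.eq_top_iff_one _).mpr h3)

lemma exists_mk_maximal {J : Ideal A} (hJ : J ≤ maximalIdeal A) [IsLocalRing (A ⧸ J)]
    {ξ : A ⧸ J} (hξ : ξ ∈ maximalIdeal (A ⧸ J)) :
    ∃ w ∈ maximalIdeal A, Ideal.Quotient.mk J w = ξ := by
  obtain ⟨w, rfl⟩ := Ideal.Quotient.mk_surjective ξ
  exact ⟨w, (quot_mk_mem_maximalIdeal hJ).mp hξ, rfl⟩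

noncomputable def quotSMulTopRingEquiv (z : A) :
    QuotSMulTop z A ≃ₗ[A] A ⧸ Ideal.span {z} :=
  Submodule.quotEquivOfEq _ _ (by
    rw [← Submodule.ideal_span_singleton_smul, StmtAux.smul_top_eq])

lemma isRegular_quot_ring_iff (z : A) (l : List (A ⧸ Ideal.span {z})) :
    IsRegular (QuotSMulTop z A) l ↔ IsRegular (A ⧸ Ideal.span {z}) l := by
  refine AddEquiv.isRegular_congr (e := (quotSMulTopRingEquiv z).toAddEquiv) ?_
  refine List.forall₂_same.mpr ?_
  intro r _ x
  obtain ⟨b, rfl⟩ := Ideal.Quotient.mk_surjective r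
  show quotSMulTopRingEquiv z ((Ideal.Quotient.mk _ b) • x)
    = (Ideal.Quotient.mk _ b) • quotSMulTopRingEquiv z x
  rw [← Ideal.Quotient.algebraMap_eq, algebraMap_smul, algebraMap_smul,
    LinearEquiv.map_smul]

end Transfers

theorem kaplansky : ∀ (n : ℕ) (A : Type u) (_ : CommRing A) (_ : IsLocalRing A)
    (_ : IsNoetherianRing A)
    (xs : List A), xs.length = n → IsRegular A xs →
    (∀ x ∈ xs, x ∈ maximalIdeal A) →
    (∀ r ∈ maximalIdeal A, ¬ IsSMulRegular (A ⧸ Ideal.ofList xs) r) →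
    ∀ (ys : List A), IsRegular A ys → (∀ y ∈ ys, y ∈ maximalIdeal A) →
    ys.length ≤ n := by
  intro n
  induction n with
  | zero =>
    intro A _ _ _ xs hlen hxs hxsm hmax ys hys hysm
    match ys with
    | [] => simp
    | y :: t =>
      exfalso
      rw [List.length_eq_zero_iff.mp hlen] at hmax
      have hy : IsSMulRegular A y := ((isRegular_cons_iff A y t).mp hys).1
      refine hmax y (hysm y List.mem_cons_self) ?_
      have e : (A ⧸ (Ideal.ofList ([] : List A))) ≃ₗ[A] A :=
        Submodule.quotEquivOfEqBot (Ideal.ofList ([] : List A) : Ideal A) Ideal.ofList_nil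
      exact (e.isSMulRegular_congr y).mpr hy
  | succ n ih =>
    intro A _ _ _ xs hlen hxs hxsm hmax ys hys hysm
    by_cases hysne : ys = []
    · rw [hysne]; simp
    have mne : maximalIdeal A ≠ ⊤ := (maximalIdeal.isMaximal A).ne_top
    have hxsne : xs ≠ [] := by intro h; rw [h] at hlen; simp at hlen
    set xst := xs.dropLast with hxst_def
    set xl := xs.getLast hxsne with hxl_def
    have hxseq : xst ++ [xl] = xs := List.dropLast_append_getLast hxsne
    have hxstlen : xst.length = n := by
      have := congrArg List.length hxseq
      simp only [List.length_append, List.length_singleton] at this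
      omega
    set yst := ys.dropLast with hyst_def
    set yl := ys.getLast hysne with hyl_def
    have hyseq : yst ++ [yl] = ys := List.dropLast_append_getLast hysne
    have hystlen : yst.length = ys.length - 1 := by
      have := congrArg List.length hyseq
      simp only [List.length_append, List.length_singleton] at this
      omega
    have hyslen1 : 1 ≤ ys.length := by
      cases ys with
      | nil => exact absurd rfl hysne
      | cons _ _ => simp
    -- memberships
    have hxstm : ∀ x ∈ xst, x ∈ maximalIdeal A := fun x hx =>
      hxsm x (List.dropLast_subset xs hx)
    have hxlm : xl ∈ maximalIdeal A := hxsm _ (List.getLast_mem hxsne)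
    have hystm : ∀ y ∈ yst, y ∈ maximalIdeal A := fun y hy =>
      hysm y (List.dropLast_subset ys hy)
    have hylm : yl ∈ maximalIdeal A := hysm _ (List.getLast_mem hysne)
    -- prefix regularity
    have hxst : IsRegular A xst := isRegular_append_left (by rw [hxseq]; exact hxs)
    have hyst : IsRegular A yst := isRegular_append_left (by rw [hyseq]; exact hys)
    have hxl_reg : IsSMulRegular (A ⧸ Ideal.ofList xst) xl :=
      last_regular (by rw [hxseq]; exact hxs.toIsWeaklyRegular)
    have hyl_reg : IsSMulRegular (A ⧸ Ideal.ofList yst) yl :=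
      last_regular (by rw [hyseq]; exact hys.toIsWeaklyRegular)
    -- common regular element z
    obtain ⟨z, hzm, hzx, hzy⟩ := exists_common_regular (maximalIdeal A) hxlm hylm
      hxl_reg hyl_reg
    -- extended regular sequences
    have hxz : IsRegular A (xst ++ [z]) :=
      isRegular_append_singleton mne hxst hxstm hzm hzx
    have hyz : IsRegular A (yst ++ [z]) :=
      isRegular_append_singleton mne hyst hystm hzm hzy
    -- exchange: maximality transfers from xst ++ [xl] to xst ++ [z]
    have hofxs : Ideal.ofList xs = Ideal.ofList xst ⊔ Ideal.span {xl} := by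
      rw [← hxseq, Ideal.ofList_append, Ideal.ofList_singleton]
    have hmax' : ∀ r ∈ maximalIdeal A,
        ¬ IsSMulRegular (A ⧸ (Ideal.ofList xst ⊔ Ideal.span {z})) r := by
      refine exchange hxlm hzm hxl_reg hzx ?_
      rw [← hofxs]
      exact hmax
    -- permute
    have hperm : IsRegular A (z :: xst) :=
      IsLocalRing.isRegular_of_perm hxz (List.perm_append_singleton z xst)
    have hpermY : IsRegular A (z :: yst) :=
      IsLocalRing.isRegular_of_perm hyz (List.perm_append_singleton z yst)
    -- quotient ring
    have hspan_le : Ideal.span {z} ≤ maximalIdeal A := by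
      rw [Ideal.span_le, Set.singleton_subset_iff]; exact hzm
    haveI hBloc : IsLocalRing (A ⧸ Ideal.span {z}) := isLocalRing_quot hspan_le
    have hxstB : IsRegular (A ⧸ Ideal.span {z})
        (xst.map (Ideal.Quotient.mk (Ideal.span {z}))) :=
      (isRegular_quot_ring_iff z _).mp ((isRegular_cons_iff' A z xst).mp hperm).2
    have hystB : IsRegular (A ⧸ Ideal.span {z})
        (yst.map (Ideal.Quotient.mk (Ideal.span {z}))) :=
      (isRegular_quot_ring_iff z _).mp ((isRegular_cons_iff' A z yst).mp hpermY).2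
    have hxstBm : ∀ w ∈ xst.map (Ideal.Quotient.mk (Ideal.span {z})),
        w ∈ maximalIdeal (A ⧸ Ideal.span {z}) := by
      intro w hw
      obtain ⟨x, hx, rfl⟩ := List.mem_map.mp hw
      exact (quot_mk_mem_maximalIdeal hspan_le).mpr (hxstm x hx)
    have hystBm : ∀ w ∈ yst.map (Ideal.Quotient.mk (Ideal.span {z})),
        w ∈ maximalIdeal (A ⧸ Ideal.span {z}) := by
      intro w hw
      obtain ⟨y, hy, rfl⟩ := List.mem_map.mp hw
      exact (quot_mk_mem_maximalIdeal hspan_le).mpr (hystm y hy)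
    have hmaxB : ∀ r ∈ maximalIdeal (A ⧸ Ideal.span {z}),
        ¬ IsSMulRegular ((A ⧸ Ideal.span {z}) ⧸
          Ideal.ofList (xst.map (Ideal.Quotient.mk (Ideal.span {z})))) r := by
      intro r hr
      obtain ⟨w, hwm, rfl⟩ := exists_mk_maximal hspan_le hr
      intro hcon
      rw [← Ideal.map_ofList] at hcon
      have := (isSMulRegular_quotQuot_iff (Ideal.span {z}) (Ideal.ofList xst) w).mp hcon
      rw [sup_comm] at this
      exact hmax' w hwm this
    have hlenB : (xst.map (Ideal.Quotient.mk (Ideal.span {z}))).length = n := by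
      rw [List.length_map]; exact hxstlen
    have hfin := ih (A ⧸ Ideal.span {z}) inferInstance hBloc inferInstance
      _ hlenB hxstB hxstBm hmaxB _ hystB hystBm
    rw [List.length_map] at hfin
    omega

end StmtAux3
namespace StmtAux4

open StmtAux2 StmtAux3

variable {R : Type*} [CommRing R] {W : Submonoid R}
variable {M : Type*} [AddCommGroup M] [Module R M]

lemma mem_smul_top_localized {I : Ideal R} {z : LocalizedModule W M} :
    z ∈ (I • ⊤ : Submodule R (LocalizedModule W M)) ↔
      ∃ m ∈ (I • ⊤ : Submodule R M), ∃ s : W, z = LocalizedModule.mk m s := by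
  constructor
  · intro hz
    refine Submodule.smul_induction_on hz ?_ ?_
    · intro r hr x _
      induction x using LocalizedModule.induction_on with
      | _ m s =>
        exact ⟨r • m, Submodule.smul_mem_smul hr Submodule.mem_top, s,
          by
            rw [LocalizedModule.smul'_mk]⟩
    · rintro x y ⟨m, hm, s, rfl⟩ ⟨m', hm', s', rfl⟩
      refine ⟨(s' : R) • m + (s : R) • m', ?_, s * s', ?_⟩
      · exact Submodule.add_mem _ (Submodule.smul_mem _ _ hm) (Submodule.smul_mem _ _ hm')
      · rw [LocalizedModule.mk_add_mk]
        congr 1 <;> rw [Submonoid.smul_def]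
  · rintro ⟨m, hm, s, rfl⟩
    have key : ∀ m ∈ (I • ⊤ : Submodule R M), ∀ s : W,
        LocalizedModule.mk m s ∈ (I • ⊤ : Submodule R (LocalizedModule W M)) := by
      intro m hm
      refine Submodule.smul_induction_on hm ?_ ?_
      · intro r hr x _ s
        rw [← LocalizedModule.smul'_mk]
        exact Submodule.smul_mem_smul hr Submodule.mem_top
      · intro x y hx hy s
        have hsplit : LocalizedModule.mk (x + y) s
            = LocalizedModule.mk x s + LocalizedModule.mk y s := by
          rw [LocalizedModule.mk_add_mk, ← smul_add, LocalizedModule.mk_cancel_common_left]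
        rw [hsplit]
        exact Submodule.add_mem _ (hx s) (hy s)
    exact key m hm s

lemma isSMulRegular_quot_localized {I : Ideal R} {x : R}
    (h : IsSMulRegular (M ⧸ (I • ⊤ : Submodule R M)) x) :
    IsSMulRegular
      (LocalizedModule W M ⧸ (I • ⊤ : Submodule R (LocalizedModule W M))) x := by
  rw [isSMulRegular_quotient_iff_mem_of_smul_mem] at h ⊢
  intro z hz
  induction z using LocalizedModule.induction_on with
  | _ m s =>
    rw [LocalizedModule.smul'_mk] at hz
    obtain ⟨n, hn, t, ht⟩ := mem_smul_top_localized.mp hz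
    obtain ⟨u, hu⟩ := LocalizedModule.mk_eq.mp ht
    -- hu : u • t • (x • m) = u • s • n
    rw [Submonoid.smul_def, Submonoid.smul_def, Submonoid.smul_def, Submonoid.smul_def] at hu
    have hmem : x • (((u : R) * (t : R)) • m) ∈ (I • ⊤ : Submodule R M) := by
      have e1 : x • (((u : R) * (t : R)) • m) = (u : R) • (t : R) • x • m := by
        rw [mul_smul, smul_comm x, smul_comm x]
      rw [e1, hu]
      exact Submodule.smul_mem _ _ (Submodule.smul_mem _ _ hn)
    have hm2 : ((u : R) * (t : R)) • m ∈ (I • ⊤ : Submodule R M) := h _ hmem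
    have : LocalizedModule.mk m s = LocalizedModule.mk (((u * t : W) : R) • m) ((u * t) * s) := by
      rw [← Submonoid.smul_def, LocalizedModule.mk_cancel_common_left]
    rw [this]
    exact mem_smul_top_localized.mpr ⟨_, by exact_mod_cast hm2, _, rfl⟩

lemma isWeaklyRegular_localizedModule {xs : List R} (h : IsWeaklyRegular M xs) :
    IsWeaklyRegular (LocalizedModule W M) xs := by
  rw [isWeaklyRegular_iff] at h ⊢
  intro i hi
  exact isSMulRegular_quot_localized (h i hi)

variable (p : Ideal R) [hp : p.IsPrime]

lemma isRegular_localization {xs : List R} (hxs : IsRegular R xs)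
    (hsub : ∀ x ∈ xs, x ∈ p) :
    IsRegular (Localization.AtPrime p)
      (xs.map (algebraMap R (Localization.AtPrime p))) ∧
    ∀ w ∈ xs.map (algebraMap R (Localization.AtPrime p)),
      w ∈ maximalIdeal (Localization.AtPrime p) := by
  have e : LocalizedModule p.primeCompl R ≃ₗ[R] Localization.AtPrime p :=
    IsLocalizedModule.iso p.primeCompl (Algebra.linearMap R (Localization.AtPrime p))
  have hweak : IsWeaklyRegular (M := Localization.AtPrime p) xs :=
    (e.isWeaklyRegular_congr xs).mp (isWeaklyRegular_localizedModule hxs.toIsWeaklyRegular)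
  have hle : Ideal.ofList (xs.map (algebraMap R (Localization.AtPrime p)))
      ≤ maximalIdeal (Localization.AtPrime p) := by
    rw [← Ideal.map_ofList, ← Localization.AtPrime.map_eq_maximalIdeal]
    exact Ideal.map_mono (ofList_le hsub)
  constructor
  · constructor
    · exact (isWeaklyRegular_map_algebraMap_iff (Localization.AtPrime p)
        (Localization.AtPrime p) xs).mpr hweak
    · intro heq
      rw [StmtAux.smul_top_eq] at heq
      refine (maximalIdeal.isMaximal (Localization.AtPrime p)).ne_top ?_
      rw [eq_top_iff, heq]
      exact hle
  · intro w hw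
    obtain ⟨x, hx, rfl⟩ := List.mem_map.mp hw
    exact hle (Ideal.subset_span (by exact List.mem_map_of_mem hx))

lemma algebraMap_mem_map_iff (J : Ideal R) (r : R) :
    algebraMap R (Localization.AtPrime p) r
      ∈ J.map (algebraMap R (Localization.AtPrime p))
      ↔ ∃ t ∈ p.primeCompl, t * r ∈ J := by
  constructor
  · intro h
    rw [IsLocalization.mem_map_algebraMap_iff p.primeCompl] at h
    obtain ⟨⟨j, w⟩, hw⟩ := h
    rw [← map_mul] at hw
    obtain ⟨c, hc⟩ := (IsLocalization.eq_iff_exists p.primeCompl _).mp hw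
    refine ⟨(c : R) * (w : R), Submonoid.mul_mem _ c.2 w.2, ?_⟩
    have e1 : (c : R) * (w : R) * r = (c : R) * (j : R) := by linear_combination hc
    rw [e1]
    exact Ideal.mul_mem_left _ _ j.2
  · rintro ⟨t, ht, htr⟩
    have h1 : algebraMap R (Localization.AtPrime p) (t * r)
        ∈ J.map (algebraMap R (Localization.AtPrime p)) := Ideal.mem_map_of_mem _ htr
    rw [map_mul] at h1
    exact (Ideal.unit_mul_mem_iff_mem _
      (IsLocalization.map_units (Localization.AtPrime p) ⟨t, ht⟩)).mp h1

/-- If `q` is an associated prime of `R ⧸ J`, then every element of the maximal ideal of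
`R_q` is a zero divisor on `R_q ⧸ J R_q`. -/
lemma noReg_of_associated (J : Ideal R) {q : Ideal R} [hq' : q.IsPrime] [IsNoetherianRing R]
    (hq : IsAssociatedPrime q (R ⧸ J)) :
    ∀ r ∈ maximalIdeal (Localization.AtPrime q),
      ¬ IsSMulRegular ((Localization.AtPrime q) ⧸
        (J.map (algebraMap R (Localization.AtPrime q)))) r := by
  obtain ⟨hq1, c', hc'⟩ := StmtAux.isAP_iff'.mp hq
  obtain ⟨c, rfl⟩ := Ideal.Quotient.mk_surjective c'
  set S := Localization.AtPrime q with hS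
  set J' := J.map (algebraMap R S) with hJ'
  set ξ := Ideal.Quotient.mk J' (algebraMap R S c) with hξdef
  have hξ : ξ ≠ 0 := by
    rw [hξdef, Ne, mk_eq_zero_iff]
    intro hmem
    obtain ⟨t, ht, htc⟩ := (algebraMap_mem_map_iff q J c).mp hmem
    refine ht ?_
    have h2 : t ∈ (R ∙ (Ideal.Quotient.mk J c)).annihilator := by
      rw [Submodule.mem_annihilator_span_singleton, smul_mk_eq_zero_iff]
      exact htc
    rw [← hc'] at h2
    exact h2
  have hann : ∀ r ∈ maximalIdeal S, r • ξ = 0 := by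
    have hle : Ideal.map (algebraMap R S) q ≤ (Submodule.span S {ξ}).annihilator := by
      rw [Ideal.map_le_iff_le_comap]
      intro b hb
      rw [Ideal.mem_comap, Submodule.mem_annihilator_span_singleton, hξdef,
        smul_mk_eq_zero_iff, ← map_mul]
      refine Ideal.mem_map_of_mem _ ?_
      have h3 : b ∈ (R ∙ (Ideal.Quotient.mk J c)).annihilator := hc' ▸ hb
      rwa [Submodule.mem_annihilator_span_singleton, smul_mk_eq_zero_iff] at h3
    intro r hr
    rw [← Localization.AtPrime.map_eq_maximalIdeal] at hr
    have := hle hr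
    rwa [Submodule.mem_annihilator_span_singleton] at this
  intro r hr
  rw [not_isSMulRegular_iff]
  exact ⟨ξ, hξ, hann r hr⟩

/-- Conversely, if the maximal ideal of `R_p` is an associated prime of `R_p ⧸ J R_p`,
then `p` is an associated prime of `R ⧸ J`. -/
lemma associated_of_localized (J : Ideal R) [IsNoetherianRing R]
    (h : IsAssociatedPrime (maximalIdeal (Localization.AtPrime p))
      ((Localization.AtPrime p) ⧸ (J.map (algebraMap R (Localization.AtPrime p))))) :
    IsAssociatedPrime p (R ⧸ J) := by
  classical
  set S := Localization.AtPrime p with hS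
  set J' := J.map (algebraMap R S) with hJ'
  haveI : IsNoetherianRing S := IsLocalization.isNoetherianRing p.primeCompl S ‹_›
  obtain ⟨hm1, ξ, hξ⟩ := StmtAux.isAP_iff'.mp h
  obtain ⟨x, rfl⟩ := Ideal.Quotient.mk_surjective ξ
  obtain ⟨⟨r, s⟩, hrs⟩ := IsLocalization.surj p.primeCompl x
  have hann_r : maximalIdeal S
      = (Submodule.span S {Ideal.Quotient.mk J' (algebraMap R S r)}).annihilator := by
    rw [hξ]
    ext b
    rw [Submodule.mem_annihilator_span_singleton, Submodule.mem_annihilator_span_singleton]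
    have he : Ideal.Quotient.mk J' (algebraMap R S r)
        = (algebraMap R S (s : R)) • Ideal.Quotient.mk J' x := by
      rw [quot_smul_mk, ← hrs, mul_comm]
    rw [he, smul_comm]
    constructor
    · intro hb; rw [hb, smul_zero]
    · intro hb
      obtain ⟨u, hu'⟩ := IsLocalization.map_units S s
      have h4 := congrArg (fun w => ((u⁻¹ : Sˣ) : S) • w) hb
      simpa [← hu', smul_smul] using h4
  have hfg : p.FG := IsNoetherian.noetherian p
  obtain ⟨G, hG⟩ := hfg
  have hstep : ∀ b ∈ G, ∃ t, t ∈ p.primeCompl ∧ t * (b * r) ∈ J := by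
    intro b hb
    have hbp : b ∈ p := hG ▸ Ideal.subset_span hb
    have h5 : algebraMap R S b ∈ maximalIdeal S := by
      rw [← Localization.AtPrime.map_eq_maximalIdeal]
      exact Ideal.mem_map_of_mem _ hbp
    rw [hann_r, Submodule.mem_annihilator_span_singleton, quot_smul_mk, ← map_mul,
      mk_eq_zero_iff] at h5
    exact (algebraMap_mem_map_iff p J (b * r)).mp h5
  choose t htW htJ using hstep
  set T := ∏ b ∈ G.attach, t b b.2 with hT
  have hTW : T ∈ p.primeCompl := Submonoid.prod_mem _ (fun b _ => htW b b.2)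
  have h1 : p ≤ (Submodule.span R {Ideal.Quotient.mk J (T * r)}).annihilator := by
    rw [← hG, Ideal.span_le]
    intro b hb
    rw [SetLike.mem_coe, Submodule.mem_annihilator_span_singleton, smul_mk_eq_zero_iff]
    have e1 : b * (T * r) = (t b hb * (b * r)) * (∏ c ∈ G.attach.erase ⟨b, hb⟩, t c c.2) := by
      rw [hT, ← Finset.mul_prod_erase G.attach _ (Finset.mem_attach G ⟨b, hb⟩)]
      ring
    rw [e1]
    exact Ideal.mul_mem_right _ _ (htJ b hb)
  have h2 : (Submodule.span R {Ideal.Quotient.mk J (T * r)}).annihilator ≤ p := by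
    intro b hb
    rw [Submodule.mem_annihilator_span_singleton, smul_mk_eq_zero_iff] at hb
    have h3 : (algebraMap R S T) • ((algebraMap R S b)
        • Ideal.Quotient.mk J' (algebraMap R S r)) = 0 := by
      rw [quot_smul_mk, quot_smul_mk, ← map_mul, ← map_mul, mk_eq_zero_iff]
      refine Ideal.mem_map_of_mem _ ?_
      rw [show T * (b * r) = b * (T * r) by ring]
      exact hb
    obtain ⟨u, hu'⟩ := IsLocalization.map_units S ⟨T, hTW⟩
    have h4 : (algebraMap R S b) • Ideal.Quotient.mk J' (algebraMap R S r) = 0 := by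
      have h6 := congrArg (fun w => ((u⁻¹ : Sˣ) : S) • w) h3
      simpa [← hu', smul_smul] using h6
    have h5 : algebraMap R S b ∈ maximalIdeal S := by
      rw [hann_r, Submodule.mem_annihilator_span_singleton]
      exact h4
    have h7 : b ∈ (maximalIdeal S).comap (algebraMap R S) := Ideal.mem_comap.mpr h5
    exact (Localization.AtPrime.comap_maximalIdeal (I := p)).le h7
  exact StmtAux.isAP_iff'.mpr ⟨hp, Ideal.Quotient.mk J (T * r), le_antisymm h1 h2⟩

end StmtAux4

/-- There are only finitely many primes `𝔭 ⊇ 𝔞` with `depth R_𝔭 = grade 𝔞`. -/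
theorem stmt0 {R : Type u} [CommRing R] [IsNoetherianRing R] (a : Ideal R) :
    {p : Ideal R | ∃ hp : p.IsPrime, a ≤ p ∧ primeDepth p hp = idealGrade a}.Finite := by
  classical
  by_cases htriv : Nontrivial R
  swap
  · refine Set.Finite.subset (Set.finite_empty) ?_
    rintro p ⟨hp, _, _⟩
    exfalso
    haveI : Subsingleton R := not_nontrivial_iff_subsingleton.mp htriv
    exact hp.ne_top (Ideal.eq_top_iff_one p |>.mpr
      (by rw [Subsingleton.elim (1 : R) 0]; exact p.zero_mem))
  by_cases ha : a = ⊤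
  · refine Set.Finite.subset (Set.finite_empty) ?_
    rintro p ⟨hp, hle, _⟩
    exact absurd (top_le_iff.mp (ha ▸ hle)) hp.ne_top
  -- main case: take a maximal regular sequence xs inside a
  obtain ⟨xs, hxs, hxsa, hxsmax⟩ := StmtAux3.exists_maximal_regular ha
  set n := xs.length with hn
  have hJle : Ideal.ofList xs ≤ a := StmtAux3.ofList_le hxsa
  have hJne : Ideal.ofList xs ≠ ⊤ := fun h => ha (top_le_iff.mp (h ▸ hJle))
  haveI : Nontrivial (R ⧸ Ideal.ofList xs) := Ideal.Quotient.nontrivial_iff.mpr hJne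
  -- a is contained in an associated prime q of R/J
  obtain ⟨q, hqass, haq⟩ :=
    StmtAux2.exists_associated_le (M := R ⧸ Ideal.ofList xs) a hxsmax
  haveI hqp : q.IsPrime := hqass.isPrime
  obtain ⟨hxsq, hxsqm⟩ := StmtAux4.isRegular_localization q hxs
    (fun x hx => haq (hxsa x hx))
  haveI : IsNoetherianRing (Localization.AtPrime q) :=
    IsLocalization.isNoetherianRing q.primeCompl (Localization.AtPrime q) ‹_›
  have hmaxq : ∀ r ∈ maximalIdeal (Localization.AtPrime q),
      ¬ IsSMulRegular ((Localization.AtPrime q) ⧸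
        Ideal.ofList (xs.map (algebraMap R (Localization.AtPrime q)))) r := by
    intro r hr
    rw [← Ideal.map_ofList]
    exact StmtAux4.noReg_of_associated (Ideal.ofList xs) hqass r hr
  -- every regular sequence inside a has length at most n
  have hbound : ∀ ys : List R, RingTheory.Sequence.IsRegular R ys →
      (∀ y ∈ ys, y ∈ a) → ys.length ≤ n := by
    intro ys hys hysa
    obtain ⟨hysq, hysqm⟩ := StmtAux4.isRegular_localization q hys
      (fun y hy => haq (hysa y hy))
    have := StmtAux3.kaplansky n (Localization.AtPrime q) inferInstance inferInstance
      inferInstance (xs.map (algebraMap R (Localization.AtPrime q)))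
      (by rw [List.length_map]) hxsq hxsqm hmaxq
      (ys.map (algebraMap R (Localization.AtPrime q))) hysq hysqm
    rwa [List.length_map] at this
  -- the grade of a equals n
  have hgrade : idealGrade a = (n : ℕ∞) := by
    apply le_antisymm
    · rw [idealGrade]
      refine iSup₂_le ?_
      intro rs hrs
      exact Nat.cast_le.mpr (hbound rs hrs.1 hrs.2)
    · rw [idealGrade]
      exact le_iSup₂ (f := fun (rs : List R)
        (_ : RingTheory.Sequence.IsRegular R rs ∧ ∀ x ∈ rs, x ∈ a) =>
          ((rs.length : ℕ∞))) xs ⟨hxs, hxsa⟩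
  -- S is contained in the (finite) set of associated primes of R/J
  refine Set.Finite.subset (StmtAux.associatedPrimes_finite R (R ⧸ Ideal.ofList xs)) ?_
  rintro p ⟨hpp, hap, hdepth⟩
  haveI := hpp
  haveI : IsNoetherianRing (Localization.AtPrime p) :=
    IsLocalization.isNoetherianRing p.primeCompl (Localization.AtPrime p) ‹_›
  obtain ⟨hxsp, hxspm⟩ := StmtAux4.isRegular_localization p hxs
    (fun x hx => hap (hxsa x hx))
  have hdepth' : primeDepth p hpp = (n : ℕ∞) := by rw [hdepth, hgrade]
  have hmaxp : ∀ r ∈ maximalIdeal (Localization.AtPrime p),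
      ¬ IsSMulRegular ((Localization.AtPrime p) ⧸
        (Ideal.map (algebraMap R (Localization.AtPrime p)) (Ideal.ofList xs))) r := by
    intro r hr hcon
    have hcon' : IsSMulRegular ((Localization.AtPrime p) ⧸
        Ideal.ofList (xs.map (algebraMap R (Localization.AtPrime p)))) r := by
      rw [← Ideal.map_ofList]
      exact hcon
    have hext : RingTheory.Sequence.IsRegular (Localization.AtPrime p)
        ((xs.map (algebraMap R (Localization.AtPrime p))) ++ [r]) :=
      StmtAux3.isRegular_append_singleton
        (maximalIdeal.isMaximal (Localization.AtPrime p)).ne_top hxsp hxspm hr hcon'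
    have hmem : ∀ w ∈ (xs.map (algebraMap R (Localization.AtPrime p))) ++ [r],
        w ∈ maximalIdeal (Localization.AtPrime p) := by
      intro w hw
      rcases List.mem_append.mp hw with h | h
      · exact hxspm w h
      · rw [List.mem_singleton.mp h]; exact hr
    have hsup : ((((xs.map (algebraMap R (Localization.AtPrime p))) ++ [r]).length : ℕ∞))
        ≤ primeDepth p hpp := by
      rw [primeDepth, localDepth]
      exact le_iSup₂ (f := fun (rs : List (Localization.AtPrime p))
        (_ : RingTheory.Sequence.IsRegular (Localization.AtPrime p) rs ∧
          ∀ x ∈ rs, x ∈ maximalIdeal (Localization.AtPrime p)) =>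
            ((rs.length : ℕ∞))) _ ⟨hext, hmem⟩
    rw [hdepth'] at hsup
    have := Nat.cast_le.mp hsup
    simp only [List.length_append, List.length_map, List.length_singleton] at this
    omega
  have hJple : Ideal.map (algebraMap R (Localization.AtPrime p)) (Ideal.ofList xs)
      ≤ maximalIdeal (Localization.AtPrime p) := by
    rw [← Localization.AtPrime.map_eq_maximalIdeal]
    exact Ideal.map_mono (le_trans hJle hap)
  haveI : Nontrivial ((Localization.AtPrime p) ⧸
      (Ideal.map (algebraMap R (Localization.AtPrime p)) (Ideal.ofList xs))) :=
    Ideal.Quotient.nontrivial_iff.mpr (fun h =>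
      (maximalIdeal.isMaximal (Localization.AtPrime p)).ne_top
        (top_le_iff.mp (h ▸ hJple)))
  obtain ⟨P, hPass, hPle⟩ := StmtAux2.exists_associated_le
    (M := (Localization.AtPrime p) ⧸
      (Ideal.map (algebraMap R (Localization.AtPrime p)) (Ideal.ofList xs)))
    (maximalIdeal (Localization.AtPrime p)) hmaxp
  have hPeq : maximalIdeal (Localization.AtPrime p) = P :=
    (maximalIdeal.isMaximal (Localization.AtPrime p)).eq_of_le hPass.isPrime.ne_top hPle
  exact StmtAux4.associated_of_localized p (Ideal.ofList xs) (hPeq ▸ hPass)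
end

section
/- Let R be a commutative Noetherian ring, 𝔞 ⊊ R an ideal, and x₁,…,xₙ an R-regular sequence contained in 𝔞 with n = grade(𝔞). If 𝔭 is a prime ideal containing 𝔞 with depth(R_𝔭) = n, then 𝔭 is an associated prime of R/(x₁,…,xₙ). -/
open RingTheory.Sequence IsLocalRing

section AuxAss

variable {R : Type*} [CommRing R] {M : Type*} [AddCommGroup M] [Module R M]

lemma aux_isAssociatedPrime_iff_ann [IsNoetherianRing R] {q : Ideal R} :
    IsAssociatedPrime q M ↔ q.IsPrime ∧ ∃ x : M, q = (R ∙ x).annihilator := by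
  rw [isAssociatedPrime_iff]
  simp only [Submodule.bot_colon']

lemma aux_isAssociatedPrime_sub_or_quot [IsNoetherianRing R] (N : Submodule R M) {q : Ideal R}
    (hq : IsAssociatedPrime q M) :
    IsAssociatedPrime q N ∨ IsAssociatedPrime q (M ⧸ N) := by
  obtain ⟨hq1, x, hx⟩ := aux_isAssociatedPrime_iff_ann.mp hq
  by_cases hcase : ∃ r, r ∉ q ∧ r • x ∈ N
  · obtain ⟨r, hr, hrx⟩ := hcase
    refine Or.inl (aux_isAssociatedPrime_iff_ann.mpr ⟨hq1, ⟨r • x, hrx⟩, ?_⟩)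
    ext s
    rw [Submodule.mem_annihilator_span_singleton]
    have h1 : (s • (⟨r • x, hrx⟩ : N) = 0) ↔ (s * r) • x = 0 := by
      rw [Subtype.ext_iff]
      simp [smul_smul]
    rw [h1, ← Submodule.mem_annihilator_span_singleton, ← hx]
    exact ⟨fun hs => Ideal.mul_mem_right r q hs,
      fun hsr => (hq1.mem_or_mem hsr).resolve_right hr⟩
  · push_neg at hcase
    refine Or.inr (aux_isAssociatedPrime_iff_ann.mpr ⟨hq1, N.mkQ x, ?_⟩)
    ext s
    rw [Submodule.mem_annihilator_span_singleton, ← map_smul, Submodule.mkQ_apply,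
      Submodule.Quotient.mk_eq_zero]
    constructor
    · intro hs
      have : s • x = 0 := Submodule.mem_annihilator_span_singleton x s |>.mp (hx ▸ hs)
      rw [this]; exact N.zero_mem
    · intro hsN
      by_contra hs
      exact hcase s hs hsN

lemma aux_ass_span_singleton [IsNoetherianRing R] {y : M} {p q : Ideal R} (hp : p.IsPrime)
    (hy : p = (R ∙ y).annihilator)
    (hq : IsAssociatedPrime q (↥(R ∙ y))) : q = p := by
  obtain ⟨hq1, z, hz⟩ := aux_isAssociatedPrime_iff_ann.mp hq
  obtain ⟨r, hr⟩ := Submodule.mem_span_singleton.mp z.2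
  have hmemy : ∀ s : R, s • y = 0 ↔ s ∈ p := by
    intro s
    rw [hy]
    exact (Submodule.mem_annihilator_span_singleton y s).symm
  have hmem : ∀ s : R, s ∈ q ↔ (s * r) • y = 0 := by
    intro s
    rw [hz, Submodule.mem_annihilator_span_singleton]
    constructor
    · intro h
      have h2 := congrArg (Subtype.val) h
      simpa [← hr, smul_smul] using h2
    · intro h
      apply Subtype.ext
      simpa [← hr, smul_smul] using h
  have hrp : r ∉ p := by
    intro hrp
    apply hq1.ne_top
    rw [Ideal.eq_top_iff_one]
    rw [hmem 1, one_mul]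
    exact (hmemy r).mpr hrp
  ext s
  rw [hmem s, hmemy (s * r)]
  exact ⟨fun h => (hp.mem_or_mem h).resolve_right hrp, fun h => Ideal.mul_mem_right r p h⟩

lemma aux_associatedPrimes_finite (R : Type*) [CommRing R] [IsNoetherianRing R]
    (M : Type*) [AddCommGroup M] [Module R M] [IsNoetherian R M] :
    (associatedPrimes R M).Finite := by
  have key : ∀ N : Submodule R M, (associatedPrimes R (M ⧸ N)).Finite := by
    intro N
    induction N using IsNoetherian.induction with
    | _ N ih =>
      rcases Set.eq_empty_or_nonempty (associatedPrimes R (M ⧸ N)) with he | ⟨pp, hpp⟩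
      · rw [he]; exact Set.finite_empty
      have hpp' := hpp
      obtain ⟨hpp1, y, hy⟩ := aux_isAssociatedPrime_iff_ann.mp hpp'
      obtain ⟨x, rfl⟩ := N.mkQ_surjective y
      have hxN : x ∉ N := by
        intro hxN
        apply hpp1.ne_top
        have h0 : N.mkQ x = 0 := (Submodule.Quotient.mk_eq_zero N).mpr hxN
        rw [hy, h0, Submodule.span_singleton_eq_bot.mpr rfl, Submodule.annihilator_bot]
      have hlt : N < N ⊔ R ∙ x := by
        refine lt_of_le_of_ne le_sup_left ?_
        intro h
        exact hxN (h ▸ Submodule.mem_sup_right (Submodule.mem_span_singleton_self x))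
      have hmapbot : N.map N.mkQ = ⊥ := by
        refine le_antisymm (Submodule.map_le_iff_le_comap.mpr ?_) bot_le
        intro w hw
        simp [Submodule.mem_comap, Submodule.Quotient.mk_eq_zero, hw]
      have hmap : (R ∙ (N.mkQ x)) = (N ⊔ R ∙ x).map N.mkQ := by
        rw [Submodule.map_sup, hmapbot, bot_sup_eq, Submodule.map_span, Set.image_singleton]
      have hsubset : associatedPrimes R (M ⧸ N) ⊆
          insert pp (associatedPrimes R (M ⧸ (N ⊔ R ∙ x))) := by
        intro q hq
        rcases aux_isAssociatedPrime_sub_or_quot (R ∙ (N.mkQ x)) hq with h1 | h2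
        · exact Set.mem_insert_iff.mpr (Or.inl (aux_ass_span_singleton hpp1 hy h1))
        · refine Set.mem_insert_iff.mpr (Or.inr ?_)
          have e : ((M ⧸ N) ⧸ (R ∙ (N.mkQ x))) ≃ₗ[R] M ⧸ (N ⊔ R ∙ x) :=
            (Submodule.quotEquivOfEq _ _ hmap).trans
              (Submodule.quotientQuotientEquivQuotient N (N ⊔ R ∙ x) le_sup_left)
          exact (e.isAssociatedPrime_iff).mp h2
      exact ((ih _ hlt).insert pp).subset hsubset
  have e : (M ⧸ (⊥ : Submodule R M)) ≃ₗ[R] M := Submodule.quotEquivOfEqBot ⊥ rfl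
  rw [← LinearEquiv.AssociatedPrimes.eq e]
  exact key ⊥

end AuxAss

open scoped TensorProduct in
/-- If `x₁,…,xₙ` is a maximal regular sequence in `𝔞` (`n = grade 𝔞`) and `𝔭 ⊇ 𝔞` is prime
with `depth R_𝔭 = n`, then `𝔭 ∈ Ass (R/(x₁,…,xₙ))`. -/
theorem stmt1 {R : Type u} [CommRing R] [IsNoetherianRing R] (a : Ideal R) (ha : a ≠ ⊤)
    (xs : List R) (hreg : RingTheory.Sequence.IsRegular R xs) (hmem : ∀ x ∈ xs, x ∈ a)
    (hlen : (xs.length : ℕ∞) = idealGrade a)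
    (p : Ideal R) (hp : p.IsPrime) (hap : a ≤ p)
    (hdepth : primeDepth p hp = (xs.length : ℕ∞)) :
    p ∈ associatedPrimes R (R ⧸ Ideal.span {x | x ∈ xs}) := by
  classical
  haveI := hp
  set Rp := Localization.AtPrime p with hRp
  set f : R →+* Rp := algebraMap R Rp with hf
  haveI : IsNoetherianRing Rp := IsLocalization.isNoetherianRing p.primeCompl Rp ‹IsNoetherianRing R›
  set m := IsLocalRing.maximalIdeal Rp with hm
  set I : Ideal R := Ideal.span {x | x ∈ xs} with hI
  -- the depth bound
  have hdepth' : localDepth Rp Rp = (xs.length : ℕ∞) := hdepth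
  have hbound : ∀ rs : List Rp, IsRegular Rp rs → (∀ x ∈ rs, x ∈ m) →
      (rs.length : ℕ∞) ≤ (xs.length : ℕ∞) := by
    intro rs h1 h2
    calc (rs.length : ℕ∞)
        ≤ localDepth Rp Rp := le_iSup₂ (f := fun (rs : List Rp)
            (_ : IsRegular Rp rs ∧ ∀ x ∈ rs, x ∈ IsLocalRing.maximalIdeal Rp) =>
            (rs.length : ℕ∞)) rs ⟨h1, h2⟩
      _ = (xs.length : ℕ∞) := hdepth'
  -- localize the regular sequence
  set xs' : List Rp := xs.map f with hxs'
  have hmem' : ∀ y ∈ xs', y ∈ m := by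
    intro y hy
    obtain ⟨x, hx, rfl⟩ := List.mem_map.mp hy
    rw [hm, ← Localization.AtPrime.map_eq_maximalIdeal]
    exact Ideal.mem_map_of_mem f (hap (hmem x hx))
  have hweak : IsWeaklyRegular Rp xs' := by
    have h1 : IsWeaklyRegular (Rp ⊗[R] R) xs := hreg.toIsWeaklyRegular.isWeaklyRegular_lTensor
    have h2 : IsWeaklyRegular Rp xs := ((TensorProduct.rid R Rp).isWeaklyRegular_congr xs).mp h1
    exact (isWeaklyRegular_map_algebraMap_iff Rp Rp xs).mpr h2
  have hsmul_top : ∀ (J : Ideal Rp), J • (⊤ : Submodule Rp Rp) = J := fun J => by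
    rw [Ideal.smul_eq_mul, Ideal.mul_top]
  set I' : Ideal Rp := Ideal.span {y | y ∈ xs'} with hI'
  have hI'le : I' ≤ m := Ideal.span_le.mpr (fun y hy => hmem' y hy)
  have hmne : m ≠ ⊤ := (IsLocalRing.maximalIdeal.isMaximal Rp).ne_top
  -- every element of m is a zerodivisor on Rp ⧸ I'
  have hne : ∀ t ∈ m, ¬ IsSMulRegular (Rp ⧸ I') t := by
    intro t ht hregt
    have e : (Rp ⧸ (Ideal.ofList xs' • ⊤ : Submodule Rp Rp)) ≃ₗ[Rp] Rp ⧸ I' :=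
      Submodule.quotEquivOfEq _ _ (hsmul_top _)
    have happ : IsWeaklyRegular Rp (xs' ++ [t]) := by
      rw [isWeaklyRegular_append_iff]
      exact ⟨hweak, (isWeaklyRegular_singleton_iff _ _).mpr ((e.isSMulRegular_congr t).mpr hregt)⟩
    have hlist : ∀ x ∈ xs' ++ [t], x ∈ m := by
      intro x hx
      rcases List.mem_append.mp hx with h | h
      · exact hmem' x h
      · rw [List.mem_singleton.mp h]; exact ht
    have hreg2 : IsRegular Rp (xs' ++ [t]) := by
      rw [RingTheory.Sequence.isRegular_iff]
      refine ⟨happ, ?_⟩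
      rw [hsmul_top]
      intro h
      exact hmne (top_le_iff.mp (h ▸ (Ideal.span_le.mpr (fun y hy => hlist y hy))))
    have hb := hbound (xs' ++ [t]) hreg2 hlist
    rw [List.length_append, List.length_map, List.length_singleton] at hb
    exact absurd (Nat.cast_le.mp hb) (by omega)
  -- m is an associated prime of Rp ⧸ I'
  have hZD : (m : Set Rp) ⊆ ⋃ q ∈ associatedPrimes Rp (Rp ⧸ I'), (q : Set Rp) := by
    intro t ht
    rw [biUnion_associatedPrimes_eq_compl_regular]
    exact hne t ht
  have hfin := aux_associatedPrimes_finite Rp (Rp ⧸ I')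
  obtain ⟨q, hq, hmq⟩ : ∃ q ∈ associatedPrimes Rp (Rp ⧸ I'), m ≤ q := by
    have h2 : (m : Set Rp) ⊆ ⋃ i ∈ hfin.toFinset, ((id i : Ideal Rp) : Set Rp) := by
      intro t ht
      have h3 := hZD ht
      simp only [Set.mem_iUnion, SetLike.mem_coe, exists_prop] at h3 ⊢
      obtain ⟨q, hq1, hq2⟩ := h3
      exact ⟨q, hfin.mem_toFinset.mpr hq1, hq2⟩
    have h4 := (Ideal.subset_union_prime (f := (id : Ideal Rp → Ideal Rp)) ⊥ ⊥
      (fun i hi _ _ => (hfin.mem_toFinset.mp hi).isPrime)).mp h2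
    obtain ⟨i, his, hi⟩ := h4
    exact ⟨i, hfin.mem_toFinset.mp his, hi⟩
  have hqm : q = m := le_antisymm (IsLocalRing.le_maximalIdeal hq.isPrime.ne_top) hmq
  obtain ⟨-, y, hy⟩ := aux_isAssociatedPrime_iff_ann.mp hq
  rw [hqm] at hy
  obtain ⟨z, rfl⟩ := Ideal.Quotient.mk_surjective (I := I') y
  obtain ⟨⟨r, s⟩, hrs⟩ := IsLocalization.mk'_surjective p.primeCompl z
  dsimp only at hrs
  have hann : ∀ t : Rp, t ∈ m ↔ t • (Ideal.Quotient.mk I' z) = 0 := by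
    intro t
    rw [hy]
    exact Submodule.mem_annihilator_span_singleton _ _
  have hmksmul : ∀ (c w : Rp), c • (Ideal.Quotient.mk I' w) = Ideal.Quotient.mk I' (c * w) := by
    intro c w
    rw [← Ideal.Quotient.mk_eq_mk, ← Ideal.Quotient.mk_eq_mk, ← Submodule.Quotient.mk_smul,
      smul_eq_mul]
  have hfsz : f s * z = f s * IsLocalization.mk' Rp r s := by rw [hrs]
  have hfr : Ideal.Quotient.mk I' (f s * z) = Ideal.Quotient.mk I' (f r) := by
    rw [hfsz, mul_comm, IsLocalization.mk'_spec]
  have hfsm : (f s : Rp) ∉ m := by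
    intro h
    exact (IsLocalRing.mem_maximalIdeal _).mp h (IsLocalization.map_units Rp s)
  have hann2 : ∀ t : Rp, t • (Ideal.Quotient.mk I' (f r)) = 0 ↔ t ∈ m := by
    intro t
    rw [← hfr, ← hmksmul, ← smul_assoc, smul_eq_mul, hmksmul, ← hmksmul, ← hann]
    constructor
    · intro h
      exact ((IsLocalRing.maximalIdeal.isMaximal Rp).isPrime.mem_or_mem h).resolve_right hfsm
    · intro h
      exact Ideal.mul_mem_right _ _ h
  have hcomap : ∀ t : R, f t ∈ m ↔ t ∈ p := by
    intro t
    conv_rhs => rw [← Localization.AtPrime.comap_maximalIdeal (I := p)]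
    exact Iff.rfl
  have hI'map : I' = Ideal.map f I := by
    have hset : {y : Rp | y ∈ xs'} = ⇑f '' {x : R | x ∈ xs} := by
      ext w
      constructor
      · intro hw
        obtain ⟨x, hx, rfl⟩ := List.mem_map.mp hw
        exact ⟨x, hx, rfl⟩
      · rintro ⟨x, hx, rfl⟩
        exact List.mem_map.mpr ⟨x, hx, rfl⟩
    rw [hI, Ideal.map_span, hI', hset]
  have hkey : ∀ t : R, t ∈ p ↔ f (t * r) ∈ Ideal.map f I := by
    intro t
    rw [← hI'map, ← hcomap t, ← hann2 (f t), hmksmul, ← map_mul,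
      Ideal.Quotient.eq_zero_iff_mem]
  -- choose clearing denominators for generators of p
  have hchoice : ∀ t : R, t ∈ p → ∃ c : R, c ∉ p ∧ c * (t * r) ∈ I := by
    intro t ht
    have h1 := (hkey t).mp ht
    rw [IsLocalization.mem_map_algebraMap_iff p.primeCompl Rp] at h1
    obtain ⟨⟨⟨a, haI⟩, s'⟩, h2⟩ := h1
    rw [← map_mul] at h2
    obtain ⟨c, hc⟩ := (IsLocalization.eq_iff_exists p.primeCompl Rp).mp h2
    refine ⟨(c : R) * (s' : R), ?_, ?_⟩
    · intro h
      rcases hp.mem_or_mem h with h' | h'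
      · exact c.2 h'
      · exact s'.2 h'
    · have : (c : R) * (s' : R) * (t * r) = (c : R) * (t * r * (s' : R)) := by ring
      rw [this, hc]
      exact Ideal.mul_mem_left _ _ haI
  obtain ⟨T, hT⟩ : p.FG := IsNoetherian.noetherian p
  have hTp : ∀ t ∈ T, t ∈ p := fun t ht => hT ▸ Ideal.subset_span ht
  choose g hg1 hg2 using hchoice
  set c : R := ∏ t ∈ T.attach, g t (hTp t t.2) with hc
  have hcnp : c ∉ p := by
    have : c ∈ p.primeCompl := Submonoid.prod_mem _ (fun i _ => hg1 (i : R) (hTp i i.2))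
    exact this
  refine aux_isAssociatedPrime_iff_ann.mpr ⟨hp, Ideal.Quotient.mk I (c * r), ?_⟩
  ext t
  rw [Submodule.mem_annihilator_span_singleton]
  have hsm : t • (Ideal.Quotient.mk I (c * r)) = Ideal.Quotient.mk I (t * (c * r)) := by
    rw [← Ideal.Quotient.mk_eq_mk, ← Ideal.Quotient.mk_eq_mk, ← Submodule.Quotient.mk_smul,
      smul_eq_mul]
  constructor
  · intro htp
    rw [hsm, Ideal.Quotient.eq_zero_iff_mem]
    have hle : p ≤ I.colon (Ideal.span {c * r}) := by
      rw [← hT, Ideal.span_le]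
      intro t' ht'
      rw [SetLike.mem_coe, Ideal.mem_colon_span_singleton]
      have h2 := hg2 t' (hTp t' ht')
      have hceq : c = g t' (hTp t' ht') * ∏ u ∈ T.attach.erase ⟨t', ht'⟩, g u (hTp u u.2) :=
        (Finset.mul_prod_erase _ _ (Finset.mem_attach T ⟨t', ht'⟩)).symm
      have h3 : t' * (c * r) =
          (∏ u ∈ T.attach.erase ⟨t', ht'⟩, g u (hTp u u.2)) * (g t' (hTp t' ht') * (t' * r)) := by
        rw [hceq]; ring
      rw [h3]
      exact Ideal.mul_mem_left _ _ h2
    have h4 := hle htp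
    rwa [Ideal.mem_colon_span_singleton] at h4
  · intro h0
    rw [hsm, Ideal.Quotient.eq_zero_iff_mem] at h0
    have h1 : f (t * c) * f r ∈ I' := by
      rw [hI'map, ← map_mul]
      refine Ideal.mem_map_of_mem f ?_
      have : t * c * r = t * (c * r) := by ring
      rw [this]; exact h0
    have h2 : (f (t * c)) • (Ideal.Quotient.mk I' (f r)) = 0 := by
      rw [hmksmul, ← map_mul, Ideal.Quotient.eq_zero_iff_mem, map_mul]
      exact h1
    have h3 : f (t * c) ∈ m := (hann2 _).mp h2
    have h4 : t * c ∈ p := (hcomap _).mp h3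
    exact (hp.mem_or_mem h4).resolve_right hcnp
end

section
/- Let R be a commutative Noetherian ring, M a finitely generated R-module, and n a natural number. A prime ideal 𝔭 satisfies μ(M_𝔭) > n if and only if 𝔭 contains the ideal I_n(M), where I_n(M) is the sum of the colon ideals (N : M) over all submodules N of M generated by at most n elements. -/
open RingTheory.Sequence IsLocalRing

lemma aux_exists_smul_mem {R : Type u} [CommRing R]
    {M : Type u} [AddCommGroup M] [Module R M] [Module.Finite R M]
    (p : Ideal R) [hp : p.IsPrime] (N : Submodule R M)
    (hN : N.localized' (Localization.AtPrime p) p.primeCompl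
      (LocalizedModule.mkLinearMap p.primeCompl M) = ⊤) :
    ∃ r ∈ p.primeCompl, ∀ m : M, r • m ∈ N := by
  classical
  set f := LocalizedModule.mkLinearMap p.primeCompl M
  have key : ∀ x : M, ∃ r ∈ p.primeCompl, r • x ∈ N := by
    intro x
    have hx : f x ∈ N.localized' (Localization.AtPrime p) p.primeCompl f := by
      rw [hN]; trivial
    obtain ⟨m, hm, s, hms⟩ := (Submodule.mem_localized' _ _ _ _ _).mp hx
    rw [← IsLocalizedModule.mk'_one p.primeCompl f x] at hms
    obtain ⟨c, hc⟩ := (IsLocalizedModule.mk'_eq_mk'_iff f m x s 1).mp hms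
    refine ⟨(c * s : p.primeCompl), (c * s).2, ?_⟩
    have : ((c : R) * (s : R)) • x = (c : R) • m := by
      simpa [one_smul, mul_smul, Submonoid.smul_def] using hc
    rw [Submonoid.coe_mul, this]
    exact N.smul_mem _ hm
  choose r hr hrN using key
  obtain ⟨g, hg⟩ := Module.Finite.fg_top (R := R) (M := M)
  refine ⟨∏ x ∈ g, r x, prod_mem fun x _ => hr x, fun m => ?_⟩
  have hm : m ∈ Submodule.span R (g : Set M) := by rw [hg]; trivial
  induction hm using Submodule.span_induction with
  | mem x hx =>
      rw [← Finset.mul_prod_erase g r hx, mul_comm, mul_smul]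
      exact N.smul_mem _ (hrN x)
  | zero => simp
  | add x y _ _ hx hy => rw [smul_add]; exact N.add_mem hx hy
  | smul a x _ hx => rw [smul_comm]; exact N.smul_mem a hx


/-- `μ(M_𝔭) > n` iff `𝔭 ⊇ I_n(M)`, where `I_n(M)` is the sum of the colon ideals `(N : M)`
over submodules `N` generated by at most `n` elements. -/
theorem stmt3 {R : Type u} [CommRing R] [IsNoetherianRing R]
    (M : Type u) [AddCommGroup M] [Module R M] [Module.Finite R M] (n : ℕ)
    (p : Ideal R) [hp : p.IsPrime] :
    n < sInf {k : ℕ | ∃ s : Finset (LocalizedModule p.primeCompl M), s.card = k ∧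
        Submodule.span (Localization.AtPrime p)
          (s : Set (LocalizedModule p.primeCompl M)) = ⊤} ↔
      (⨆ (N : Submodule R M)
          (_ : ∃ s : Finset M, s.card ≤ n ∧ Submodule.span R (s : Set M) = N),
        N.colon ⊤) ≤ p := by
    classical
  set f := LocalizedModule.mkLinearMap p.primeCompl M with hf
  set T := {k : ℕ | ∃ s : Finset (LocalizedModule p.primeCompl M), s.card = k ∧
        Submodule.span (Localization.AtPrime p)
          (s : Set (LocalizedModule p.primeCompl M)) = ⊤} with hT
  constructor
  · intro h
    refine iSup₂_le fun N hN => ?_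
    obtain ⟨t, htn, htN⟩ := hN
    by_contra hcon
    obtain ⟨r, hrN, hrp⟩ := SetLike.not_le_iff_exists.mp hcon
    have hloc := Submodule.localized'_span (N := LocalizedModule p.primeCompl M) (Localization.AtPrime p) p.primeCompl f (t : Set M)
    rw [htN] at hloc
    have hspan : Submodule.span (Localization.AtPrime p)
        ((t.image f : Finset (LocalizedModule p.primeCompl M)) : Set (LocalizedModule p.primeCompl M)) = ⊤ := by
      rw [Finset.coe_image, ← hloc, eq_top_iff]
      rintro x -
      obtain ⟨⟨m, s⟩, rfl⟩ := IsLocalizedModule.mk'_surjective p.primeCompl f x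
      refine ⟨r • m, Submodule.mem_colon.mp hrN m trivial, ⟨r, hrp⟩ * s, ?_⟩
      rw [show r • m = (⟨r, hrp⟩ : p.primeCompl) • m from rfl,
        IsLocalizedModule.mk'_cancel_left]
      rfl
    have hmem : (t.image f).card ∈ T := ⟨t.image f, rfl, hspan⟩
    exact absurd h (not_lt.mpr ((Nat.sInf_le hmem).trans
      ((Finset.card_image_le).trans htn)))
  · intro h
    by_contra hn
    push_neg at hn
    haveI : Module.Finite (Localization.AtPrime p) (LocalizedModule p.primeCompl M) :=
      Module.Finite.of_isLocalizedModule p.primeCompl f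
    obtain ⟨g0, hg0⟩ := Module.Finite.fg_top
      (R := Localization.AtPrime p) (M := LocalizedModule p.primeCompl M)
    have hne : T.Nonempty := ⟨g0.card, g0, rfl, hg0⟩
    obtain ⟨s, hscard, hsspan⟩ := Nat.sInf_mem hne
    have hsurj : ∀ x : LocalizedModule p.primeCompl M,
        ∃ m : M, ∃ v : p.primeCompl, IsLocalizedModule.mk' f m v = x := by
      intro x
      obtain ⟨⟨m, v⟩, hmv⟩ := IsLocalizedModule.mk'_surjective p.primeCompl f x
      exact ⟨m, v, hmv⟩
    choose c u hcu using hsurj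
    set N := Submodule.span R ((s.image c : Finset M) : Set M) with hNdef
    have hNtop : N.localized' (Localization.AtPrime p) p.primeCompl f = ⊤ := by
      rw [hNdef, Submodule.localized'_span, eq_top_iff, ← hsspan]
      refine Submodule.span_le.mpr fun x hx => ?_
      have hfc : f (c x) ∈ Submodule.span (Localization.AtPrime p)
          (f '' ((s.image c : Finset M) : Set M)) := by
        refine Submodule.subset_span ⟨c x, ?_, rfl⟩
        simp only [Finset.coe_image]
        exact Set.mem_image_of_mem c hx
      have : x = IsLocalization.mk' (Localization.AtPrime p) (1 : R) (u x) • f (c x) := by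
        rw [← IsLocalizedModule.mk'_one p.primeCompl f (c x),
          IsLocalizedModule.mk'_smul_mk', one_smul, mul_one, hcu]
      rw [this]
      exact Submodule.smul_mem _ _ hfc
    obtain ⟨r, hrp, hrN⟩ := aux_exists_smul_mem p N hNtop
    have hcard : (s.image c).card ≤ n :=
      (Finset.card_image_le).trans (hscard ▸ hn)
    have hle : N.colon ⊤ ≤ ⨆ (N : Submodule R M)
        (_ : ∃ s : Finset M, s.card ≤ n ∧ Submodule.span R (s : Set M) = N),
        N.colon ⊤ :=
      le_iSup₂ (f := fun (N : Submodule R M) _ => N.colon ⊤) N ⟨s.image c, hcard, rfl⟩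
    exact hrp (h (hle (Submodule.mem_colon.mpr fun m _ => hrN m)))
end

section
/- Let R be a commutative Noetherian ring and f : N → N' a homomorphism of finitely generated R-modules with N torsion-free (i.e., the natural map N → N ⊗ Q(R) is injective). Then f is injective if and only if f ⊗_R R_𝔮 is injective for every associated prime 𝔮 of R. -/
open RingTheory.Sequence IsLocalRing

/-- The localized map `f_𝔮 : N_𝔮 → N'_𝔮` is injective. -/
def MapInjectiveAtPrime {R : Type*} [CommRing R] (q : Ideal R) (hq : q.IsPrime)
    {N N' : Type*} [AddCommGroup N] [Module R N] [AddCommGroup N'] [Module R N']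
    (f : N →ₗ[R] N') : Prop :=
  letI := hq
  Function.Injective (IsLocalizedModule.map q.primeCompl
    (LocalizedModule.mkLinearMap q.primeCompl N)
    (LocalizedModule.mkLinearMap q.primeCompl N') f)


open Submodule

/-- Associated primes of `M` come from a submodule `S` or the quotient `M ⧸ S`. -/
theorem myAssPrime_extension {R M : Type*} [CommRing R] [AddCommGroup M] [Module R M]
    (S : Submodule R M) {p : Ideal R} (hp : IsAssociatedPrime p M) :
    IsAssociatedPrime p S ∨ IsAssociatedPrime p (M ⧸ S) := by
  obtain ⟨hp1, x, hx⟩ := hp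
  have key : ∀ a : R, a ∈ p ↔ ∃ n : ℕ, a ^ n • x = 0 := by
    intro a
    rw [hx, Ideal.mem_radical_iff]
    simp only [Submodule.mem_colon_singleton, Submodule.mem_bot]
  by_cases hcap : ∀ r : R, r • x ∈ S → r ∈ p
  · right
    refine ⟨hp1, S.mkQ x, ?_⟩
    ext a
    rw [key a, Ideal.mem_radical_iff]
    simp only [Submodule.mem_colon_singleton, Submodule.mem_bot, Submodule.mkQ_apply,
      ← Submodule.Quotient.mk_smul, Submodule.Quotient.mk_eq_zero]
    constructor
    · rintro ⟨n, hn⟩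
      exact ⟨n, by rw [hn]; exact S.zero_mem⟩
    · rintro ⟨n, hn⟩
      exact (key a).mp (hp1.mem_of_pow_mem n (hcap _ hn))
  · left
    push_neg at hcap
    obtain ⟨r, hrS, hr0⟩ := hcap
    refine ⟨hp1, ⟨r • x, hrS⟩, ?_⟩
    ext a
    rw [key a, Ideal.mem_radical_iff]
    simp only [Submodule.mem_colon_singleton, Submodule.mem_bot]
    have hco : ∀ n : ℕ, (a ^ n • (⟨r • x, hrS⟩ : S) = 0) ↔ a ^ n • r • x = 0 := by
      intro n; rw [Subtype.ext_iff]; rfl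
    simp only [hco]
    constructor
    · rintro ⟨n, hn⟩
      exact ⟨n, by rw [smul_comm, hn, smul_zero]⟩
    · rintro ⟨n, hn⟩
      have : a ^ n * r ∈ p := by
        rw [key]; exact ⟨1, by rw [pow_one, mul_smul]; exact hn⟩
      rcases hp1.mem_or_mem this with h | h
      · exact (key a).mp (hp1.mem_of_pow_mem n h)
      · exact absurd h hr0

/-- The only associated prime of `R ⧸ p` (module quotient) is `p`. -/
theorem myAssPrime_quotient {R : Type*} [CommRing R] {p q : Ideal R} (hp : p.IsPrime)
    (hq : IsAssociatedPrime q (R ⧸ (p : Submodule R R))) : q = p := by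
  obtain ⟨hq1, x, hx⟩ := hq
  obtain ⟨y, rfl⟩ := Submodule.Quotient.mk_surjective (p : Submodule R R) x
  have hy : y ∉ p := by
    intro hy
    have : (Submodule.Quotient.mk y : R ⧸ (p : Submodule R R)) = 0 :=
      (Submodule.Quotient.mk_eq_zero _).mpr hy
    rw [this] at hx
    apply hq1.ne_top
    rw [hx, eq_top_iff]
    intro a _
    rw [Ideal.mem_radical_iff]
    exact ⟨1, by simp [Submodule.mem_colon_singleton]⟩
  ext a
  rw [hx, Ideal.mem_radical_iff]
  simp only [Submodule.mem_colon_singleton, Submodule.mem_bot, ← Submodule.Quotient.mk_smul,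
    Submodule.Quotient.mk_eq_zero]
  constructor
  · rintro ⟨n, h⟩
    rcases hp.mem_or_mem (show a ^ n * y ∈ p from h) with h | h
    · exact hp.mem_of_pow_mem n h
    · exact absurd h hy
  · intro h
    exact ⟨1, by rw [pow_one]; exact p.mul_mem_right y h⟩

/-- Associated primes of a Noetherian module are finite. -/
theorem myAssociatedPrimes_finite {R M : Type*} [CommRing R] [IsNoetherianRing R]
    [AddCommGroup M] [Module R M] [IsNoetherian R M] :
    (associatedPrimes R M).Finite := by
  have H : ∀ N : Submodule R M, (associatedPrimes R (M ⧸ N)).Finite := by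
    intro N
    induction N using IsNoetherian.induction with
    | _ N ih =>
    by_cases hsub : Subsingleton (M ⧸ N)
    · rw [associatedPrimes.eq_empty_of_subsingleton]; exact Set.finite_empty
    · have : Nontrivial (M ⧸ N) := not_subsingleton_iff_nontrivial.mp hsub
      obtain ⟨p, hp⟩ := associatedPrimes.nonempty R (M ⧸ N)
      obtain ⟨hp1, x, hx⟩ := _root_.isAssociatedPrime_iff.mp hp
      have hx0 : x ≠ 0 := by
        rintro rfl
        apply hp1.ne_top
        rw [hx, eq_top_iff]
        intro a _
        rw [Submodule.mem_colon_singleton, smul_zero, Submodule.mem_bot]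
      set N' : Submodule R M := Submodule.comap N.mkQ (R ∙ x) with hN'
      have hle : N ≤ N' := by
        intro m hm
        simp only [hN', Submodule.mem_comap, Submodule.mkQ_apply]
        rw [(Submodule.Quotient.mk_eq_zero _).mpr hm]
        exact Submodule.zero_mem _
      have hlt : N < N' := by
        obtain ⟨y, hy⟩ := Submodule.Quotient.mk_surjective N x
        refine lt_of_le_of_ne hle fun hEq => hx0 ?_
        have hyN' : y ∈ N' := by
          simp only [hN', Submodule.mem_comap, Submodule.mkQ_apply, hy]
          exact Submodule.mem_span_singleton_self x
        rw [← hEq] at hyN'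
        rw [← hy]
        exact (Submodule.Quotient.mk_eq_zero _).mpr hyN'
      have hmap : Submodule.map N.mkQ N' = (R ∙ x) :=
        Submodule.map_comap_eq_of_surjective (Submodule.mkQ_surjective N) _
      -- equivalence ((M ⧸ N) ⧸ (R ∙ x)) ≃ₗ[R] M ⧸ N'
      have e : ((M ⧸ N) ⧸ (R ∙ x)) ≃ₗ[R] M ⧸ N' :=
        (Submodule.quotEquivOfEq _ _ hmap.symm).trans
          (Submodule.quotientQuotientEquivQuotient N N' hle)
      -- Ass of the span R ∙ x is {p}
      have hker : LinearMap.ker (LinearMap.toSpanSingleton R (M ⧸ N) x)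
          = (p : Submodule R R) := by
        ext a
        rw [LinearMap.mem_ker, LinearMap.toSpanSingleton_apply, hx,
          Submodule.mem_colon_singleton, Submodule.mem_bot]
      have e1 : (R ⧸ (p : Submodule R R)) ≃ₗ[R]
          (R ⧸ LinearMap.ker (LinearMap.toSpanSingleton R (M ⧸ N) x)) :=
        Submodule.quotEquivOfEq _ _ hker.symm
      have e2 : (R ⧸ LinearMap.ker (LinearMap.toSpanSingleton R (M ⧸ N) x)) ≃ₗ[R]
          LinearMap.range (LinearMap.toSpanSingleton R (M ⧸ N) x) :=
        (LinearMap.toSpanSingleton R (M ⧸ N) x).quotKerEquivRange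
      have e3 : (LinearMap.range (LinearMap.toSpanSingleton R (M ⧸ N) x) :
          Submodule R (M ⧸ N)) ≃ₗ[R] (R ∙ x) :=
        LinearEquiv.ofEq _ _ (LinearMap.span_singleton_eq_range R (M ⧸ N) x).symm
      have espan : (R ⧸ (p : Submodule R R)) ≃ₗ[R] (R ∙ x) := e1.trans (e2.trans e3)
      have hsubset : associatedPrimes R (M ⧸ N)
          ⊆ insert p (associatedPrimes R (M ⧸ N')) := by
        intro q hq
        rcases myAssPrime_extension (R ∙ x) hq with h | h
        · left
          have : IsAssociatedPrime q (R ⧸ (p : Submodule R R)) :=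
            espan.isAssociatedPrime_iff.mpr h
          exact myAssPrime_quotient hp1 this
        · right
          exact (e.isAssociatedPrime_iff).mp h
      exact Set.Finite.subset (Set.Finite.insert p (ih N' hlt)) hsubset
  have e0 : (M ⧸ (⊥ : Submodule R M)) ≃ₗ[R] M := Submodule.quotEquivOfEqBot ⊥ rfl
  rw [← LinearEquiv.AssociatedPrimes.eq e0]
  exact H ⊥

/-- A homomorphism out of a torsion-free module is injective iff it is injective after
localizing at every associated prime of `R`. -/
theorem stmt6 {R : Type u} [CommRing R] [IsNoetherianRing R]
    {N N' : Type u} [AddCommGroup N] [Module R N] [AddCommGroup N'] [Module R N']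
    [Module.Finite R N] [Module.Finite R N']
    (f : N →ₗ[R] N') (htf : IsTorsionFreeMod R N) :
    Function.Injective f ↔ ∀ (q : Ideal R) (hq : q.IsPrime),
      q ∈ associatedPrimes R R → MapInjectiveAtPrime q hq f := by
  constructor
  · intro hinj q hq _
    haveI := hq
    intro a b hab
    induction a using LocalizedModule.induction_on with
    | h m s =>
    induction b using LocalizedModule.induction_on with
    | h m' s' =>
    rw [IsLocalizedModule.map_LocalizedModules, IsLocalizedModule.map_LocalizedModules,
      LocalizedModule.mk_eq] at hab
    obtain ⟨u, hu⟩ := hab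
    rw [LocalizedModule.mk_eq]
    refine ⟨u, hinj ?_⟩
    simp only [Submonoid.smul_def, map_smul] at hu ⊢
    exact hu
  · intro h
    rw [injective_iff_map_eq_zero]
    intro x hx
    by_contra hx0
    -- every q ∈ Ass R fails to contain Ann(x)
    have claim1 : ∀ q ∈ associatedPrimes R R,
        ¬ ((R ∙ x).annihilator ≤ q) := by
      intro q hqass hle
      haveI hq : q.IsPrime := hqass.isPrime
      have hinj := h q hq hqass
      have h1 : (IsLocalizedModule.map q.primeCompl
          (LocalizedModule.mkLinearMap q.primeCompl N)
          (LocalizedModule.mkLinearMap q.primeCompl N') f)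
          (LocalizedModule.mk x 1) = 0 := by
        rw [IsLocalizedModule.map_LocalizedModules, hx, LocalizedModule.zero_mk]
      have h2 : (LocalizedModule.mk x (1 : q.primeCompl)) = 0 := by
        apply hinj
        rw [h1, map_zero]
      rw [← LocalizedModule.zero_mk (1 : q.primeCompl), LocalizedModule.mk_eq] at h2
      obtain ⟨u, hu⟩ := h2
      simp only [one_smul, smul_zero] at hu
      have humem : (u : R) ∈ (R ∙ x).annihilator := by
        rw [Submodule.mem_annihilator_span_singleton]; exact hu
      exact u.2 (hle humem)
    -- Ann(x) consists of zerodivisors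
    have claim2 : ((R ∙ x).annihilator : Set R) ⊆ ⋃ p ∈ associatedPrimes R R, (p : Set R) := by
      rw [biUnion_associatedPrimes_eq_compl_regular R R]
      intro a ha
      have ha' : a • x = 0 := by
        have : a ∈ (R ∙ x).annihilator := ha
        rwa [Submodule.mem_annihilator_span_singleton] at this
      simp only [Set.mem_compl_iff, Set.mem_setOf_eq]
      intro hreg
      apply hx0
      have haS : a ∈ nonZeroDivisors R := by
        refine mem_nonZeroDivisors_iff.mpr ⟨fun z hz => hreg (show a • z = a • 0 by
          rw [smul_eq_mul, smul_zero]; exact hz), fun z hz => ?_⟩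
        apply hreg
        show a • z = a • 0
        rw [smul_eq_mul, smul_zero, mul_comm]
        exact hz
      apply htf
      show LocalizedModule.mk x 1 = LocalizedModule.mkLinearMap (nonZeroDivisors R) N 0
      rw [map_zero, ← LocalizedModule.zero_mk (1 : nonZeroDivisors R), LocalizedModule.mk_eq]
      exact ⟨⟨a, haS⟩, by simpa only [one_smul, smul_zero, Submonoid.smul_def] using ha'⟩
    -- finiteness + prime avoidance
    have hfin : (associatedPrimes R R).Finite := myAssociatedPrimes_finite
    have hsub : ((R ∙ x).annihilator : Set R) ⊆
        ⋃ i ∈ hfin.toFinset, ((id i : Ideal R) : Set R) := by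
      intro a ha
      obtain ⟨p, hp, hap⟩ := Set.mem_iUnion₂.mp (claim2 ha)
      exact Set.mem_iUnion₂.mpr ⟨p, hfin.mem_toFinset.mpr hp, hap⟩
    have := (Ideal.subset_union_prime (⊥ : Ideal R) (⊥ : Ideal R)
      (fun i hi _ _ => (hfin.mem_toFinset.mp hi).isPrime)).mp hsub
    obtain ⟨q, hq, hle⟩ := this
    exact claim1 q (hfin.mem_toFinset.mp hq) hle
end

section
/- Let R be a commutative Noetherian local ring and 𝔞 a proper ideal of R with grade(𝔞) ≥ 2. Then 𝔞 is not a reflexive R-module (equivalently, the natural map 𝔞 → 𝔞** is not an isomorphism) unless 𝔞 = R. -/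
open RingTheory.Sequence IsLocalRing

open Pointwise

/-- A proper ideal of grade `≥ 2` in a Noetherian local ring is not reflexive. -/
theorem stmt9 {R : Type u} [CommRing R] [IsNoetherianRing R] [IsLocalRing R]
    (a : Ideal R) (ha : a ≠ ⊤) (hg : 2 ≤ idealGrade a) :
    ¬ Function.Bijective (Module.Dual.eval R a) := by
  intro hbij
  -- extract a regular sequence of length ≥ 2 in a
  obtain ⟨rs, ⟨hreg, hmem⟩, hlen⟩ :
      ∃ rs : List R, (RingTheory.Sequence.IsRegular R rs ∧ ∀ x ∈ rs, x ∈ a) ∧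
        2 ≤ rs.length := by
    by_contra hcon
    push_neg at hcon
    have hle : idealGrade a ≤ 1 := by
      refine iSup₂_le fun rs h => ?_
      have := hcon rs h
      exact_mod_cast Nat.lt_succ_iff.mp this
    have : (2 : ℕ∞) ≤ 1 := hg.trans hle
    exact absurd this (by decide)
  obtain ⟨x, y, rest, rfl⟩ : ∃ x y rest, rs = x :: y :: rest := by
    rcases rs with _ | ⟨x, _ | ⟨y, rest⟩⟩ <;> simp at hlen
    exact ⟨x, y, rest, rfl⟩
  have h1 := (RingTheory.Sequence.isRegular_cons_iff R x (y :: rest)).mp hreg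
  have hx : IsSMulRegular R x := h1.1
  have h2 := (RingTheory.Sequence.isRegular_cons_iff _ y rest).mp h1.2
  have hy : IsSMulRegular (QuotSMulTop x R) y := h2.1
  have hxa : x ∈ a := hmem x (by simp)
  have hya : y ∈ a := hmem y (by simp)
  -- x • ⊤ = span {x}
  have hspan : (x • ⊤ : Submodule R R) = Ideal.span {x} := by
    rw [← Submodule.ideal_span_singleton_smul, smul_eq_mul, Ideal.mul_top]
  -- divisibility from regularity of y mod x
  have hdiv : ∀ r : R, y * r ∈ Ideal.span {x} → ∃ c, r = x * c := by
    intro r hr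
    have hz : (Submodule.Quotient.mk r : QuotSMulTop x R) = 0 := by
      apply hy
      show y • (Submodule.Quotient.mk r : QuotSMulTop x R) = y • (0 : QuotSMulTop x R)
      rw [smul_zero, ← Submodule.Quotient.mk_smul, smul_eq_mul,
        Submodule.Quotient.mk_eq_zero, hspan]
      exact hr
    rw [Submodule.Quotient.mk_eq_zero, hspan, Ideal.mem_span_singleton'] at hz
    obtain ⟨c, hc⟩ := hz
    exact ⟨c, by rw [← hc, mul_comm]⟩
  set ex : a := ⟨x, hxa⟩ with hex
  set ey : a := ⟨y, hya⟩ with hey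
  -- for every f : a →ₗ R, f ex is divisible by x
  have key : ∀ f : Module.Dual R a, ∃ c, f ex = x * c := by
    intro f
    apply hdiv
    have hsw : y • ex = x • ey := by
      apply Subtype.ext
      simp [hex, hey, smul_eq_mul, mul_comm]
    have : y * f ex = x * f ey := by
      rw [← smul_eq_mul, ← smul_eq_mul, ← map_smul, ← map_smul, hsw]
    rw [this, Ideal.mem_span_singleton']
    exact ⟨f ey, mul_comm _ _⟩
  have hxc : ∀ c c' : R, x * c = x * c' → c = c' := fun c c' h =>
    hx (by simpa [smul_eq_mul] using h)
  have hθ : ∀ f : Module.Dual R a, f ex = x * (key f).choose := fun f => (key f).choose_spec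
  -- the linear map θ : a** ∋ f ↦ f(x)/x
  let θ : Module.Dual R (Module.Dual R a) :=
    { toFun := fun f => (key f).choose
      map_add' := fun f g => hxc _ _ (by
        rw [← hθ (f + g), LinearMap.add_apply, mul_add, ← hθ f, ← hθ g])
      map_smul' := fun r f => hxc _ _ (by
        rw [← hθ (r • f), LinearMap.smul_apply, RingHom.id_apply,
          smul_eq_mul, smul_eq_mul, mul_left_comm x, ← hθ f]) }
  -- θ applied to the inclusion a ↪ R gives 1
  have hincl : θ a.subtype = 1 := hxc _ _ (by
    show x * (key a.subtype).choose = x * 1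
    rw [← hθ a.subtype, mul_one]
    rfl)
  obtain ⟨m, hm⟩ := hbij.2 θ
  have h1m : (m : R) = 1 := by
    have := congrArg (fun ψ => ψ a.subtype) hm
    simpa [Module.Dual.eval, hincl] using this
  exact ha (Ideal.eq_top_iff_one a |>.mpr (h1m ▸ m.2))
end

section
/- Let R be a commutative Noetherian ring, x₁,…,xₙ an R-regular sequence, n ≥ 2, and M = Rⁿ/R·(x₁,…,xₙ). Then M is torsion-free of rank n−1, i.e., M is a 1-torsionless R-module. -/
open RingTheory.Sequence IsLocalRing

theorem aux_sat {R : Type*} [CommRing R] {n : ℕ} (hn : 2 ≤ n) (x : Fin n → R)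
    (ha : ∀ t : R, x ⟨0, by omega⟩ * t = 0 → t = 0)
    (hb : ∀ t : R, x ⟨1, by omega⟩ * t ∈ Ideal.span {x ⟨0, by omega⟩} →
      t ∈ Ideal.span {x ⟨0, by omega⟩})
    {m : Fin n → R} {r s : R} (hs : s ∈ nonZeroDivisors R)
    (h : ∀ i, s * m i = r * x i) : ∃ t, ∀ i, m i = t * x i := by
  have hs' := mem_nonZeroDivisors_iff.1 hs
  set i0 : Fin n := ⟨0, by omega⟩
  set i1 : Fin n := ⟨1, by omega⟩
  have cross : ∀ i j, m i * x j = m j * x i := by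
    intro i j
    have h0 : (m i * x j - m j * x i) * s = 0 := by
      linear_combination x j * h i - x i * h j
    have := sub_eq_zero.1 (hs'.2 _ h0)
    linear_combination this
  have h1 : x i1 * m i0 ∈ Ideal.span {x i0} :=
    Ideal.mem_span_singleton'.2 ⟨m i1, by linear_combination - cross i0 i1⟩
  obtain ⟨t, ht⟩ := Ideal.mem_span_singleton'.1 (hb _ h1)
  refine ⟨t, fun j => ?_⟩
  have h2 : x i0 * (m j - t * x j) = 0 := by
    linear_combination cross j i0 - x j * ht
  have := sub_eq_zero.1 (ha _ h2)
  linear_combination this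

theorem aux_main {R : Type*} [CommRing R] {n : ℕ} (hn : 2 ≤ n) (x : Fin n → R)
    (ha : ∀ t : R, x ⟨0, by omega⟩ * t = 0 → t = 0)
    (hb : ∀ t : R, x ⟨1, by omega⟩ * t ∈ Ideal.span {x ⟨0, by omega⟩} →
      t ∈ Ideal.span {x ⟨0, by omega⟩}) :
    IsTorsionFreeMod R ((Fin n → R) ⧸
      LinearMap.range (LinearMap.toSpanSingleton R (Fin n → R) x)) ∧
    HasRank R ((Fin n → R) ⧸
      LinearMap.range (LinearMap.toSpanSingleton R (Fin n → R) x)) (n - 1) := by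
  classical
  set S := nonZeroDivisors R
  set Q := Localization S
  set N := LinearMap.range (LinearMap.toSpanSingleton R (Fin n → R) x) with hN
  set i0 : Fin n := ⟨0, by omega⟩
  have aS : x i0 ∈ S := mem_nonZeroDivisors_iff.2 ⟨fun t ht => ha t ht, fun t ht => ha t (by rw [mul_comm]; exact ht)⟩
  -- key saturation property of N
  have key : ∀ (s : R), s ∈ S → ∀ m : Fin n → R, s • m ∈ N → m ∈ N := by
    intro s hs m hm
    obtain ⟨r, hr⟩ := hm
    have hcomp : ∀ i, s * m i = r * x i := by
      intro i
      have := congrFun hr i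
      simp only [LinearMap.toSpanSingleton_apply, Pi.smul_apply, smul_eq_mul] at this
      linear_combination - this
    obtain ⟨t, ht⟩ := aux_sat hn x ha hb hs hcomp
    exact ⟨t, by ext i; simp [LinearMap.toSpanSingleton_apply, ht i, mul_comm]⟩
  constructor
  · -- torsion-free
    intro z w h
    obtain ⟨m, rfl⟩ := Submodule.Quotient.mk_surjective N z
    obtain ⟨m', rfl⟩ := Submodule.Quotient.mk_surjective N w
    rw [LocalizedModule.mkLinearMap_apply, LocalizedModule.mkLinearMap_apply,
      LocalizedModule.mk_eq] at h
    obtain ⟨u, hu⟩ := h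
    simp only [one_smul, Submonoid.smul_def] at hu
    rw [Submodule.Quotient.eq]
    have hmem : (u : R) • (m - m') ∈ N := by
      have h2 : Submodule.Quotient.mk ((u : R) • (m - m')) = (0 : (Fin n → R) ⧸ N) := by
        rw [Submodule.Quotient.mk_smul, Submodule.Quotient.mk_sub, smul_sub, hu, sub_self]
      exact (Submodule.Quotient.mk_eq_zero N).1 h2
    exact key u u.2 _ hmem
  · -- rank
    set n' := n - 1
    set fsucc : Fin n' → Fin n := fun i => ⟨i.1 + 1, by omega⟩ with hfsucc
    have hu : IsLocalization.mk' Q 1 ⟨x i0, aS⟩ * algebraMap R Q (x i0) = 1 := by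
      simpa using IsLocalization.mk'_spec Q 1 ⟨x i0, aS⟩
    set u : Q := IsLocalization.mk' Q 1 ⟨x i0, aS⟩ with hu_def
    set comp : Fin n → ((Fin n → R) →ₗ[R] Q) :=
      fun j => (Algebra.linearMap R Q).comp (LinearMap.proj j) with hcomp_def
    set ψ₀ : (Fin n → R) →ₗ[R] (Fin n' → Q) :=
      LinearMap.pi (fun i => comp (fsucc i) - (algebraMap R Q (x (fsucc i)) * u) • comp i0)
      with hψ₀_def
    have hψ₀ : ∀ (m : Fin n → R) (i : Fin n'),
        ψ₀ m i = algebraMap R Q (m (fsucc i))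
          - algebraMap R Q (x (fsucc i)) * u * algebraMap R Q (m i0) := by
      intro m i
      simp [hψ₀_def, hcomp_def, smul_eq_mul]
    have hker : N ≤ LinearMap.ker ψ₀ := by
      rintro _ ⟨r, rfl⟩
      rw [LinearMap.mem_ker]
      ext i
      rw [LinearMap.toSpanSingleton_apply]
      have : ψ₀ (r • x) i = algebraMap R Q (r * x (fsucc i))
          - algebraMap R Q (x (fsucc i)) * u * algebraMap R Q (r * x i0) := by
        rw [hψ₀]; simp
      rw [this]
      simp only [map_mul, Pi.zero_apply]
      linear_combination (- algebraMap R Q r * algebraMap R Q (x (fsucc i))) * hu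
    set ψ : ((Fin n → R) ⧸ N) →ₗ[R] (Fin n' → Q) := Submodule.liftQ N ψ₀ hker with hψ_def
    have hψmk : ∀ m : Fin n → R, ψ (Submodule.Quotient.mk m) = ψ₀ m := fun m => rfl
    have hloc : IsLocalizedModule S ψ := by
      constructor
      · -- map_units
        intro s
        have hcs : (IsLocalization.mk' Q 1 s) * algebraMap R Q (s : R) = 1 := by
          simpa using IsLocalization.mk'_spec Q 1 s
        have hv : ∀ v : Fin n' → Q, (IsLocalization.mk' Q 1 s) • ((s : R) • v) = v := by
          intro v
          rw [← algebraMap_smul Q (s : R) v, smul_smul, hcs, one_smul]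
        refine (Module.End.isUnit_iff _).mpr
          ⟨fun v w hvw => ?_, fun v => ⟨(IsLocalization.mk' Q 1 s) • v, ?_⟩⟩
        · simp only [Module.algebraMap_end_apply] at hvw
          rw [← hv v, ← hv w, hvw]
        · simp only [Module.algebraMap_end_apply]
          rw [← algebraMap_smul Q (s : R) ((IsLocalization.mk' Q 1 s) • v), smul_smul,
            mul_comm, hcs, one_smul]
      · -- surj
        intro y
        obtain ⟨c, hc⟩ := IsLocalization.exist_integer_multiples_of_finite S y
        have hc' : ∀ i, ∃ r : R, algebraMap R Q r = c • y i := fun i =>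
          RingHom.mem_range.1 (hc i)
        choose rr hrr using hc'
        set m : Fin n → R := fun j => if h : j.1 = 0 then 0 else rr ⟨j.1 - 1, by omega⟩
          with hm_def
        refine ⟨⟨Submodule.Quotient.mk m, c⟩, ?_⟩
        ext i
        rw [hψmk, hψ₀]
        have hm0 : m i0 = 0 := by simp [hm_def]; intro h; exact absurd rfl h
        have hmi : m (fsucc i) = rr i := by
          have h1 : (fsucc i).1 ≠ 0 := by simp [hfsucc]
          simp only [hm_def]
          rw [dif_neg h1]
          exact congrArg rr (Fin.ext (by simp [hfsucc]))
        rw [hm0, hmi, map_zero, mul_zero, sub_zero, hrr]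
        simp
      · -- exists_of_eq
        intro z w h
        obtain ⟨p, rfl⟩ := Submodule.Quotient.mk_surjective N z
        obtain ⟨q, rfl⟩ := Submodule.Quotient.mk_surjective N w
        rw [hψmk, hψmk] at h
        set d : Fin n → R := p - q with hd_def
        have hd : ψ₀ d = 0 := by rw [hd_def, map_sub, h, sub_self]
        have heq : ∀ i : Fin n', algebraMap R Q (d (fsucc i) * x i0)
            = algebraMap R Q (x (fsucc i) * d i0) := by
          intro i
          have h1 : ψ₀ d i = 0 := by rw [hd]; rfl
          rw [hψ₀] at h1
          rw [map_mul, map_mul]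
          linear_combination algebraMap R Q (x i0) * h1
            + algebraMap R Q (x (fsucc i)) * algebraMap R Q (d i0) * hu
        have heq' : ∀ i : Fin n', ∃ cc : S,
            (cc : R) * (d (fsucc i) * x i0) = (cc : R) * (x (fsucc i) * d i0) := fun i =>
          (IsLocalization.eq_iff_exists S Q).1 (heq i)
        choose cc hcc using heq'
        have hprodS : (∏ i, (cc i : R)) ∈ S := Submonoid.prod_mem S fun i _ => (cc i).2
        have hmem : ((x i0 * ∏ i, (cc i : R)) • d) ∈ N := by
          refine ⟨(∏ i, (cc i : R)) * d i0, ?_⟩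
          ext j
          simp only [LinearMap.toSpanSingleton_apply, Pi.smul_apply, smul_eq_mul]
          rcases Nat.eq_zero_or_pos j.1 with hj | hj
          · have hji : j = i0 := Fin.ext (by simpa using hj)
            subst hji
            ring
          · have hj' : j = fsucc ⟨j.1 - 1, by omega⟩ := Fin.ext (by simp [hfsucc]; omega)
            rw [hj']
            rw [← Finset.mul_prod_erase Finset.univ _
              (Finset.mem_univ (⟨j.1 - 1, by omega⟩ : Fin n'))]
            linear_combination - (∏ i ∈ Finset.univ.erase (⟨j.1 - 1, by omega⟩ : Fin n'),
              (cc i : R)) * hcc ⟨j.1 - 1, by omega⟩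
        refine ⟨⟨x i0 * ∏ i, (cc i : R), mul_mem aS hprodS⟩, ?_⟩
        simp only [Submonoid.smul_def]
        rw [← Submodule.Quotient.mk_smul, ← Submodule.Quotient.mk_smul, Submodule.Quotient.eq]
        have hsub : (x i0 * ∏ i, (cc i : R)) • p - (x i0 * ∏ i, (cc i : R)) • q
            = (x i0 * ∏ i, (cc i : R)) • d := by
          rw [hd_def, smul_sub]
        rw [hsub]
        exact hmem
    haveI := hloc
    set e₀ := IsLocalizedModule.iso S ψ with he₀
    refine ⟨LinearEquiv.ofLinear (e₀.toLinearMap.extendScalarsOfIsLocalization S Q)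
      (e₀.symm.toLinearMap.extendScalarsOfIsLocalization S Q) ?_ ?_⟩
    · ext v; simp
    · ext v; simp

/-- For a regular sequence `x₁,…,xₙ` with `n ≥ 2`, the module `M = Rⁿ/R·(x₁,…,xₙ)` is
torsion-free of rank `n − 1`. -/
theorem stmt13 {R : Type u} [CommRing R] [IsNoetherianRing R]
    (xs : List R) (hreg : RingTheory.Sequence.IsRegular R xs) (hn : 2 ≤ xs.length) :
    IsTorsionFreeMod R ((Fin xs.length → R) ⧸
      LinearMap.range (LinearMap.toSpanSingleton R (Fin xs.length → R)
        (fun i => xs.get i))) ∧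
    HasRank R ((Fin xs.length → R) ⧸
      LinearMap.range (LinearMap.toSpanSingleton R (Fin xs.length → R)
        (fun i => xs.get i))) (xs.length - 1) := by
  obtain ⟨a, b, l, rfl⟩ : ∃ a b l, xs = a :: b :: l := by
    match xs, hn with
    | a :: b :: l, _ => exact ⟨a, b, l, rfl⟩
  have w0 := hreg.toIsWeaklyRegular.regular_mod_prev 0 (by simp)
  have w1 := hreg.toIsWeaklyRegular.regular_mod_prev 1 (by simp)
  have ha : ∀ t : R, a * t = 0 → t = 0 := by
    intro t ht
    have h2 : a • (Submodule.Quotient.mk t :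
        R ⧸ (Ideal.ofList ((a :: b :: l).take 0) • ⊤ : Submodule R R)) = a • 0 := by
      rw [smul_zero, ← Submodule.Quotient.mk_smul]
      rw [show a • t = 0 by rw [smul_eq_mul, ht]]
      exact Submodule.Quotient.mk_zero _
    have h4 := (Submodule.Quotient.mk_eq_zero _).1 (w0 h2)
    simpa [Ideal.ofList_nil] using h4
  have hJ : (Ideal.ofList ((a :: b :: l).take 1) • ⊤ : Submodule R R) = Ideal.span {a} := by
    rw [show (a :: b :: l).take 1 = [a] from rfl, Ideal.ofList_singleton,
      Ideal.smul_eq_mul, Ideal.mul_top]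
  have hb : ∀ t : R, b * t ∈ Ideal.span {a} → t ∈ Ideal.span {a} := by
    intro t ht
    have h2 : b • (Submodule.Quotient.mk t :
        R ⧸ (Ideal.ofList ((a :: b :: l).take 1) • ⊤ : Submodule R R)) = b • 0 := by
      rw [smul_zero, ← Submodule.Quotient.mk_smul]
      refine (Submodule.Quotient.mk_eq_zero _).2 ?_
      rw [hJ]
      simpa [smul_eq_mul] using ht
    have h4 := (Submodule.Quotient.mk_eq_zero _).1 (w1 h2)
    rwa [hJ] at h4
  exact aux_main (by simp) (fun i => (a :: b :: l).get i) ha hb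
end

section
/- Let R be a commutative Noetherian ring, g : Rⁿ → M a surjection of finitely generated R-modules, x ∈ Rⁿ, M'' = M/Rg(x), and p' : Rⁿ → Rⁿ/Rx the canonical projection with induced surjection g'' : Rⁿ/Rx → M''. If g(x) is a linearly independent element of M (i.e., ann(g(x)) consists only of zero after tensoring with Q(R), so Rg(x) has rank 1) and ker(g) is torsion-free, then p' restricts to an isomorphism from ker(g) onto ker(g''). -/
open RingTheory.Sequence IsLocalRing

/-- Step (4') in the proof of Theorem 2: the projection `Rⁿ → Rⁿ/Rx` restricts to an
isomorphism from `ker g` onto `ker g''`. -/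
theorem stmt15 {R : Type u} [CommRing R] [IsNoetherianRing R]
    {M : Type u} [AddCommGroup M] [Module R M] [Module.Finite R M] (n : ℕ)
    (g : (Fin n → R) →ₗ[R] M) (hg : Function.Surjective g) (x : Fin n → R)
    (hli : Function.Injective (LinearMap.toSpanSingleton
      (Localization (nonZeroDivisors R)) (LocalizedModule (nonZeroDivisors R) M)
      (LocalizedModule.mkLinearMap (nonZeroDivisors R) M (g x))))
    (htf : IsTorsionFreeMod R (LinearMap.ker g))
    (g'' : ((Fin n → R) ⧸ Submodule.span R {x}) →ₗ[R] (M ⧸ Submodule.span R {g x}))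
    (hcomm : g''.comp (Submodule.mkQ (Submodule.span R {x})) =
      (Submodule.mkQ (Submodule.span R {g x})).comp g) :
    Set.InjOn (Submodule.mkQ (Submodule.span R {x})) (LinearMap.ker g) ∧
      Submodule.mkQ (Submodule.span R {x}) '' (LinearMap.ker g) =
        (LinearMap.ker g'' : Set ((Fin n → R) ⧸ Submodule.span R {x})) := by
  have key : ∀ r : R, r • g x = 0 → r = 0 := by
    intro r hr
    have h1 : (LinearMap.toSpanSingleton (Localization (nonZeroDivisors R))
        (LocalizedModule (nonZeroDivisors R) M)
        (LocalizedModule.mkLinearMap (nonZeroDivisors R) M (g x)))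
        (algebraMap R (Localization (nonZeroDivisors R)) r) = 0 := by
      rw [LinearMap.toSpanSingleton_apply, algebraMap_smul, ← map_smul, hr, map_zero]
    have h2 : algebraMap R (Localization (nonZeroDivisors R)) r = 0 := by
      apply hli
      rw [h1, map_zero]
    have := IsLocalization.injective (Localization (nonZeroDivisors R))
      (le_refl (nonZeroDivisors R))
    exact this (by rw [h2, map_zero])
  constructor
  · intro a ha b hb hab
    have hmem : a - b ∈ Submodule.span R {x} := by
      rw [Submodule.mkQ_apply, Submodule.mkQ_apply] at hab
      rwa [Submodule.Quotient.eq] at hab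
    obtain ⟨r, hr⟩ := Submodule.mem_span_singleton.mp hmem
    have hg0 : r • g x = 0 := by
      rw [← map_smul, hr, map_sub, LinearMap.mem_ker.mp ha, LinearMap.mem_ker.mp hb,
        sub_zero]
    have : r = 0 := key r hg0
    have : a - b = 0 := by rw [← hr, this, zero_smul]
    exact sub_eq_zero.mp this
  · ext z
    constructor
    · rintro ⟨y, hy, rfl⟩
      have : g'' (Submodule.mkQ (Submodule.span R {x}) y) =
          Submodule.mkQ (Submodule.span R {g x}) (g y) := by
        have := congrFun (congrArg DFunLike.coe hcomm) y
        simpa using this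
      simp only [SetLike.mem_coe, LinearMap.mem_ker, this,
        LinearMap.mem_ker.mp hy, map_zero]
    · intro hz
      obtain ⟨y, rfl⟩ := Submodule.mkQ_surjective _ z
      have hgy : Submodule.mkQ (Submodule.span R {g x}) (g y) = 0 := by
        have := congrFun (congrArg DFunLike.coe hcomm) y
        simp only [LinearMap.comp_apply] at this
        rw [← this]
        exact hz
      have hmem : g y ∈ Submodule.span R {g x} := by
        rwa [Submodule.mkQ_apply, Submodule.Quotient.mk_eq_zero] at hgy
      obtain ⟨r, hr⟩ := Submodule.mem_span_singleton.mp hmem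
      refine ⟨y - r • x, ?_, ?_⟩
      · simp [LinearMap.mem_ker, map_sub, map_smul, hr]
      · rw [Submodule.mkQ_apply, Submodule.mkQ_apply, Submodule.Quotient.eq]
        simp [Submodule.smul_mem, Submodule.mem_span_singleton_self]
end
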